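/- arXiv:1104.2981 — 12 statements merged into one kernel-verified Lean document; each statement's English description precedes it below -/
import Mathlib

section
/- Cartan's lemma: Let V be a bounded connected open subset of a finite-dimensional complex vector space E containing 0, and let Φ : V → V be a holomorphic map with Φ(0) = 0 and D_0Φ = id. Then Φ is the identity map on V. -/
open scoped Topology NNReal ENNReal Classical
open FormalMultilinearSeries Metric Set

section Aux
variable {E : Type*} [NormedAddCommGroup E] [NormedSpace ℂ E]

/-- A term in the composition sum vanishes if some block coefficient has zero diagonal. -/
lemma compAlong_diag_zero (q p : FormalMultilinearSeries ℂ E E) {n : ℕ} (c : Composition n)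
    (i : Fin c.length) (v : E) (h : p (c.blocksFun i) (fun _ => v) = 0) :
    q.compAlongComposition p c (fun _ => v) = 0 := by
  rw [FormalMultilinearSeries.compAlongComposition_apply]
  apply ContinuousMultilinearMap.map_coord_zero _ i
  simpa [FormalMultilinearSeries.applyComposition, Function.comp_def] using h

lemma compAlong_diag_ones (q p : FormalMultilinearSeries ℂ E E) (n : ℕ)
    (hp1 : ∀ w, p 1 (fun _ => w) = w) (v : E) :
    q.compAlongComposition p (Composition.ones n) (fun _ => v) = q n (fun _ => v) := by
  rw [FormalMultilinearSeries.compAlongComposition_apply]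
  apply q.congr (Composition.ones_length n)
  intro i him hin
  rw [FormalMultilinearSeries.applyComposition_ones]
  exact hp1 v

lemma compAlong_diag_single (q p : FormalMultilinearSeries ℂ E E) {n : ℕ} (hn : 0 < n)
    (hq1 : ∀ w, q 1 (fun _ => w) = w) (v : E) :
    q.compAlongComposition p (Composition.single n hn) (fun _ => v) = p n (fun _ => v) := by
  rw [FormalMultilinearSeries.compAlongComposition_apply,
    FormalMultilinearSeries.applyComposition_single]
  have := q.congr (Composition.single_length hn) (v := fun _ => p n (fun _ => v))
    (w := fun _ : Fin 1 => p n (fun _ => v)) (fun i h1 h2 => rfl)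
  rw [this]
  exact hq1 _

/-- "Good up to m" diagonal structure. -/
def Good (p : FormalMultilinearSeries ℂ E E) (m : ℕ) : Prop :=
  (∀ v, p 1 (fun _ => v) = v) ∧ (∀ j, 2 ≤ j → j < m → ∀ v : E, p j (fun _ => v) = 0)

lemma comp_diag_expand (q p : FormalMultilinearSeries ℂ E E) (n : ℕ) (v : E) :
    (q.comp p) n (fun _ => v) =
      ∑ c : Composition n, q.compAlongComposition p c (fun _ => v) := by
  simp [FormalMultilinearSeries.comp, ContinuousMultilinearMap.sum_apply]

lemma good_comp {p q : FormalMultilinearSeries ℂ E E} {m : ℕ} (hm : 2 ≤ m)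
    (hp : Good p m) (hq : Good q m) :
    Good (q.comp p) m ∧
      ∀ v, (q.comp p) m (fun _ => v) = q m (fun _ => v) + p m (fun _ => v) := by
  have hm0 : 0 < m := by omega
  have blockbig : ∀ {n : ℕ} (c : Composition n), c ≠ Composition.ones n →
      ∃ i : Fin c.length, 2 ≤ c.blocksFun i := by
    intro n c hc
    obtain ⟨k, hk, lt_k⟩ := Composition.ne_ones_iff.1 hc
    obtain ⟨i, hi⟩ : ∃ (i : Fin c.blocks.length), c.blocks[i] = k := List.get_of_mem hk
    refine ⟨⟨i.val, c.blocks_length ▸ i.prop⟩, ?_⟩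
    have : c.blocksFun ⟨i.val, c.blocks_length ▸ i.prop⟩ = k := by
      simp [Composition.blocksFun, ← hi, List.get_eq_getElem]
    omega
  refine ⟨⟨?_, ?_⟩, ?_⟩
  · intro v
    rw [FormalMultilinearSeries.comp_coeff_one, hp.1, hq.1]
  · intro j h2j hjm v
    rw [comp_diag_expand]
    apply Finset.sum_eq_zero
    intro c _
    by_cases hc : c = Composition.ones j
    · subst hc
      rw [compAlong_diag_ones q p j hp.1]
      exact hq.2 j h2j hjm v
    · obtain ⟨i, hi⟩ := blockbig c hc
      refine compAlong_diag_zero q p c i v (hp.2 _ hi ?_ v)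
      have := Composition.blocksFun_le c i
      omega
  · intro v
    classical
    rw [comp_diag_expand]
    have hns : Composition.ones m ≠ Composition.single m hm0 := by
      intro h
      have := Composition.ones_length m
      rw [h, Composition.single_length] at this
      omega
    rw [← Finset.sum_subset (Finset.subset_univ {Composition.ones m, Composition.single m hm0})
      ?_]
    · rw [Finset.sum_pair hns, compAlong_diag_ones q p m hp.1,
        compAlong_diag_single q p hm0 hq.1]
    · intro c _ hc
      simp only [Finset.mem_insert, Finset.mem_singleton, not_or] at hc
      obtain ⟨i, hi⟩ := blockbig c hc.1
      refine compAlong_diag_zero q p c i v (hp.2 _ hi ?_ v)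
      exact (Composition.ne_single_iff hm0).1 hc.2 i

/-- Restriction of a power series representation to a line. -/
lemma restrict_line {f : E → E} {q : FormalMultilinearSeries ℂ E E}
    (h : HasFPowerSeriesAt f q 0) (v : E) :
    HasFPowerSeriesAt (fun z : ℂ => f (z • v))
      (fun k => ContinuousMultilinearMap.mkPiRing ℂ (Fin k) (q k (fun _ => v))) 0 := by
  obtain ⟨r, hr⟩ := h
  obtain ⟨ρ, hρ0, hρr⟩ : ∃ ρ : ℝ≥0, 0 < ρ ∧ (ρ : ℝ≥0∞) < r := by
    rcases ENNReal.lt_iff_exists_nnreal_btwn.1 hr.r_pos with ⟨ρ, h1, h2⟩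
    exact ⟨ρ, by exact_mod_cast h1, h2⟩
  obtain ⟨Cb, hCb0, hCb⟩ := q.norm_mul_pow_le_of_lt_radius (hρr.trans_le hr.r_le)
  set R : ℝ≥0 := ρ / (‖v‖₊ + 1) with hR
  have hR0 : 0 < R := by
    positivity
  refine ⟨R, ?_, ?_, ?_⟩
  · -- r_le : radius bound
    apply FormalMultilinearSeries.le_radius_of_bound _ Cb
    intro k
    have h1 : ‖q k (fun _ => v)‖ ≤ ‖q k‖ * ‖v‖ ^ k := by
      simpa using (q k).le_opNorm (fun _ => v)
    have hRr : (R : ℝ) = (ρ : ℝ) / (‖v‖ + 1) := by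
      rw [hR]
      push_cast
      rfl
    rw [ContinuousMultilinearMap.norm_mkPiRing, hRr]
    calc ‖q k (fun _ => v)‖ * ((ρ : ℝ) / (‖v‖ + 1)) ^ k
        ≤ (‖q k‖ * ‖v‖ ^ k) * ((ρ : ℝ) / (‖v‖ + 1)) ^ k := by
          apply mul_le_mul_of_nonneg_right h1
          positivity
      _ = (‖q k‖ * ρ ^ k) * (‖v‖ / (‖v‖ + 1)) ^ k := by
          rw [div_pow, div_pow]
          ring
      _ ≤ (‖q k‖ * ρ ^ k) * 1 := by
          apply mul_le_mul_of_nonneg_left _ (by positivity)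
          apply pow_le_one₀ (by positivity)
          rw [div_le_one (by positivity)]
          linarith
      _ ≤ Cb := by rw [mul_one]; exact hCb k
  · exact_mod_cast hR0
  · intro y hy
    rw [mem_emetric_ball_zero_iff, enorm_eq_nnnorm, ENNReal.coe_lt_coe] at hy
    have hyv : (‖y • v‖₊ : ℝ≥0∞) < r := by
      refine lt_trans ?_ hρr
      rw [ENNReal.coe_lt_coe]
      have h1 : ‖y‖₊ * (‖v‖₊ + 1) < ρ := by
        rw [← lt_div_iff₀ (by positivity)]
        exact hy
      calc ‖y • v‖₊ = ‖y‖₊ * ‖v‖₊ := by rw [nnnorm_smul]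
        _ ≤ ‖y‖₊ * (‖v‖₊ + 1) := by
            exact mul_le_mul_right (le_add_right le_rfl) _
        _ < ρ := h1
    have hterm : (fun k : ℕ =>
        ContinuousMultilinearMap.mkPiRing ℂ (Fin k) (q k fun _ => v) (fun _ => y))
        = fun k => q k (fun _ => y • v) := by
      funext k
      rw [ContinuousMultilinearMap.mkPiRing_apply]
      exact (ContinuousMultilinearMap.map_smul_univ (q k) (fun _ => y) (fun _ => v)).symm
    have hs := hr.hasSum (y := y • v) (by rwa [mem_emetric_ball_zero_iff, enorm_eq_nnnorm])
    simp only [zero_add] at hs ⊢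
    rw [hterm]
    exact hs

end Aux



/-- **Cartan's lemma.** Let `V` be a bounded connected open subset of a
finite-dimensional complex vector space `E` containing `0`, and let
`Φ : V → V` be holomorphic with `Φ 0 = 0` and `D₀Φ = id`. Then `Φ = id` on `V`. -/
theorem cartan_lemma {E : Type*} [NormedAddCommGroup E] [NormedSpace ℂ E]
    [FiniteDimensional ℂ E] (V : Set E) (hVo : IsOpen V) (hVb : Bornology.IsBounded V)
    (hVc : IsConnected V) (h0V : (0 : E) ∈ V) (Φ : E → E)
    (hΦa : AnalyticOnNhd ℂ Φ V) (hΦV : Set.MapsTo Φ V V)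
    (hΦ0 : Φ 0 = 0) (hDΦ : fderiv ℂ Φ 0 = ContinuousLinearMap.id ℂ E) :
    ∀ v ∈ V, Φ v = v := by
  obtain ⟨p, hp⟩ := hΦa 0 h0V
  have hp0 : ∀ w : Fin 0 → E, p 0 w = 0 := by
    intro w
    have := hp.coeff_zero w
    rwa [hΦ0] at this
  have hp1 : ∀ v : E, p 1 (fun _ => v) = v := by
    intro v
    have h := hp.fderiv_eq
    rw [hDΦ] at h
    have h2 := congrArg (fun L : E →L[ℂ] E => L v) h
    simp only [ContinuousLinearMap.id_apply, continuousMultilinearCurryFin1_apply] at h2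
    calc p 1 (fun _ => v) = p 1 (Fin.snoc (0 : Fin 0 → E) v) := by
          congr 1
      _ = v := h2.symm
  suffices hev : Φ =ᶠ[𝓝 (0:E)] id by
    intro w hw
    exact hΦa.eqOn_of_preconnected_of_eventuallyEq analyticOnNhd_id
      hVc.isPreconnected h0V hev hw
  suffices hdiag : ∀ j, 2 ≤ j → ∀ v : E, p j (fun _ => v) = 0 by
    obtain ⟨r, hr⟩ := hp
    have hball : EMetric.ball (0:E) r ∈ 𝓝 (0:E) := EMetric.ball_mem_nhds _ hr.r_pos
    filter_upwards [hball] with y hy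
    have hs := hr.hasSum hy
    simp only [zero_add] at hs
    have h2 : HasSum (fun k : ℕ => p k (fun _ => y)) y := by
      have heq : (fun k : ℕ => p k (fun _ => y)) = fun k => if k = 1 then y else 0 := by
        funext k
        match k with
        | 0 => simpa using hp0 _
        | 1 => simp [hp1]
        | (j+2) => simpa using hdiag (j+2) (by omega) y
      rw [heq]
      exact hasSum_ite_eq 1 y
    exact hs.unique h2
  by_contra hne
  push_neg at hne
  have hex : ∃ j, 2 ≤ j ∧ ∃ v : E, p j (fun _ => v) ≠ 0 := by
    obtain ⟨j, hj, v, hv⟩ := hne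
    exact ⟨j, hj, v, hv⟩
  classical
  set m := Nat.find hex with hmdef
  obtain ⟨hm2, v, hv⟩ : 2 ≤ m ∧ ∃ v : E, p m (fun _ => v) ≠ 0 := Nat.find_spec hex
  have hmin : ∀ j, 2 ≤ j → j < m → ∀ w : E, p j (fun _ => w) = 0 := by
    intro j h2 hj w
    by_contra hw
    exact (Nat.find_min hex hj) ⟨h2, w, hw⟩
  have hgoodp : Good p m := ⟨hp1, hmin⟩
  have hfix : ∀ n : ℕ, Φ^[n] 0 = 0 := fun n => Function.iterate_fixed hΦ0 n
  have key : ∀ n : ℕ, ∃ Q : FormalMultilinearSeries ℂ E E,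
      HasFPowerSeriesAt Φ^[n] Q 0 ∧ Good Q m ∧
      ∀ w : E, Q m (fun _ => w) = (n : ℂ) • (p m (fun _ => w)) := by
    intro n
    induction n with
    | zero =>
      obtain ⟨k, hk⟩ : ∃ k, m = k + 2 := ⟨m - 2, by omega⟩
      refine ⟨(ContinuousLinearMap.id ℂ E).fpowerSeries 0, ?_, ⟨?_, ?_⟩, ?_⟩
      · simpa using (ContinuousLinearMap.id ℂ E).hasFPowerSeriesAt 0
      · intro w
        simp [ContinuousLinearMap.fpowerSeries]
      · intro j h2 hj w
        obtain ⟨i, hi⟩ : ∃ i, j = i + 2 := ⟨j - 2, by omega⟩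
        subst hi
        simp [ContinuousLinearMap.fpowerSeries]
      · intro w
        rw [hk]
        simp [ContinuousLinearMap.fpowerSeries]
    | succ n ih =>
      obtain ⟨Q, hQ, hQg, hQm⟩ := ih
      have hΦat : HasFPowerSeriesAt Φ p (Φ^[n] 0) := by rw [hfix]; exact hp
      obtain ⟨hgood, hsum⟩ := good_comp hm2 hQg hgoodp
      refine ⟨p.comp Q, ?_, hgood, ?_⟩
      · rw [Function.iterate_succ']
        exact hΦat.comp hQ
      · intro w
        rw [hsum w, hQm w, Nat.cast_succ, add_smul, one_smul, add_comm]
  -- constants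
  obtain ⟨C, hC0, hC⟩ := hVb.exists_pos_norm_le
  obtain ⟨ε, hε0, hεV⟩ := Metric.isOpen_iff.1 hVo 0 h0V
  have hr0 : 0 < ε / 2 := by positivity
  set r : ℝ := ε / 2 with hrdef
  have hrV : Metric.closedBall (0:E) r ⊆ V :=
    (Metric.closedBall_subset_ball (by rw [hrdef]; linarith)).trans hεV
  haveI : Nonempty (Fin m) := ⟨⟨0, by omega⟩⟩
  have hv0 : v ≠ 0 := by
    rintro rfl
    apply hv
    have h0 : (fun _ : Fin m => (0:E)) = (0 : Fin m → E) := rfl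
    rw [h0]
    exact (p m).map_zero
  have hvn : 0 < ‖v‖ := norm_pos_iff.2 hv0
  set R : ℝ≥0 := ⟨r / ‖v‖, by positivity⟩ with hRdef
  have hR0 : 0 < R := by
    rw [← NNReal.coe_lt_coe]
    show (0:ℝ) < r / ‖v‖
    positivity
  have hRcoe : (R : ℝ) = r / ‖v‖ := rfl
  have hRr : (R : ℝ) * ‖v‖ = r := by
    rw [hRcoe]
    field_simp
  have hAn : ∀ n, AnalyticOnNhd ℂ (Φ^[n]) V := by
    intro n
    induction n with
    | zero =>
      rw [Function.iterate_zero]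
      exact analyticOnNhd_id
    | succ n ih =>
      rw [Function.iterate_succ']
      exact hΦa.comp ih (hΦV.iterate n)
  have bound : ∀ n : ℕ, (n : ℝ) * ‖p m (fun _ => v)‖ ≤ C / r ^ m * ‖v‖ ^ m := by
    intro n
    obtain ⟨Q, hQ, _, hQm⟩ := key n
    have hmapsTo : ∀ z : ℂ, z ∈ Metric.closedBall (0:ℂ) R → z • v ∈ V := by
      intro z hz
      apply hrV
      rw [mem_closedBall_zero_iff] at hz ⊢
      rw [norm_smul]
      calc ‖z‖ * ‖v‖ ≤ (R:ℝ) * ‖v‖ := mul_le_mul_of_nonneg_right hz (norm_nonneg v)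
        _ = r := hRr
    have hdiff : DifferentiableOn ℂ (fun z : ℂ => Φ^[n] (z • v))
        (Metric.closedBall (0:ℂ) R) := by
      intro z hz
      apply DifferentiableAt.differentiableWithinAt
      have h1 : DifferentiableAt ℂ (Φ^[n]) (z • v) :=
        ((hAn n) _ (hmapsTo z hz)).differentiableAt
      exact h1.comp z ((differentiable_id.smul_const v) z)
    have hcauchy := hdiff.hasFPowerSeriesOnBall hR0
    have hline := restrict_line hQ v
    have heq := hline.eq_formalMultilinearSeries hcauchy.hasFPowerSeriesAt
    have hnorm : ‖Q m (fun _ => v)‖ =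
        ‖cauchyPowerSeries (fun z : ℂ => Φ^[n] (z • v)) 0 (R:ℝ) m‖ := by
      rw [← congrFun heq m, ContinuousMultilinearMap.norm_mkPiRing]
    have hgb : ∀ θ : ℝ, ‖Φ^[n] (circleMap 0 (R:ℝ) θ • v)‖ ≤ C := by
      intro θ
      apply hC
      apply hΦV.iterate n
      apply hmapsTo
      rw [mem_closedBall_zero_iff]
      rw [norm_circleMap_zero, abs_of_nonneg R.coe_nonneg]
    have hcont : Continuous fun θ : ℝ => ‖Φ^[n] ((circleMap 0 (R:ℝ) θ) • v)‖ := by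
      apply Continuous.norm
      apply (hdiff.continuousOn).comp_continuous (continuous_circleMap 0 (R:ℝ))
      intro θ
      rw [mem_closedBall_zero_iff, norm_circleMap_zero,
        abs_of_nonneg R.coe_nonneg]
    have hint : (∫ θ in (0:ℝ)..2*Real.pi, ‖Φ^[n] ((circleMap 0 (R:ℝ) θ) • v)‖)
        ≤ 2 * Real.pi * C := by
      calc (∫ θ in (0:ℝ)..2*Real.pi, ‖Φ^[n] ((circleMap 0 (R:ℝ) θ) • v)‖)
          ≤ ∫ _θ in (0:ℝ)..2*Real.pi, C :=
            intervalIntegral.integral_mono_on Real.two_pi_pos.le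
              (hcont.intervalIntegrable _ _) intervalIntegrable_const (fun θ _ => hgb θ)
        _ = 2 * Real.pi * C := by simp [mul_comm]
    have hest := norm_cauchyPowerSeries_le (fun z : ℂ => Φ^[n] (z • v)) 0 (R:ℝ) m
    have hQnorm : ‖Q m (fun _ => v)‖ = (n:ℝ) * ‖p m (fun _ => v)‖ := by
      rw [hQm v, norm_smul, Complex.norm_natCast]
    have hfin : ‖Q m (fun _ => v)‖ ≤ C * ((R:ℝ)⁻¹) ^ m := by
      rw [hnorm]
      refine hest.trans ?_
      rw [abs_of_nonneg R.coe_nonneg]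
      apply mul_le_mul_of_nonneg_right _ (by positivity)
      calc (2 * Real.pi)⁻¹ * ∫ θ in (0:ℝ)..2*Real.pi, ‖Φ^[n] ((circleMap 0 (R:ℝ) θ) • v)‖
          ≤ (2 * Real.pi)⁻¹ * (2 * Real.pi * C) := by
            apply mul_le_mul_of_nonneg_left hint
            positivity
        _ = C := by
            field_simp
    rw [← hQnorm]
    refine hfin.trans (le_of_eq ?_)
    rw [hRcoe]
    rw [inv_pow, div_pow, inv_div, div_pow]
    field_simp
  have hpmv : 0 < ‖p m (fun _ => v)‖ := norm_pos_iff.2 hv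
  obtain ⟨n, hn⟩ := exists_nat_gt ((C / r ^ m * ‖v‖ ^ m) / ‖p m (fun _ => v)‖)
  have hb := bound n
  rw [← le_div_iff₀ hpmv] at hb
  linarith
end

section
/- Let V and W be bounded connected open subsets of a finite-dimensional complex vector space E, both containing 0. If Φ : V → W is a biholomorphism and Ψ : V → W is a holomorphic map with Ψ(0) = Φ(0) and D_0Ψ = D_0Φ, then Ψ = Φ. -/
open Set FormalMultilinearSeries

noncomputable section

namespace CartanAux

variable {E : Type*} [NormedAddCommGroup E] [NormedSpace ℂ E]

/-- Key combinatorial lemma: if `p` and `q` both start with identity first-order term and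
vanish in degrees `2 ≤ j < k`, then `(p.comp q) m = p m + q m` for `2 ≤ m ≤ k`. -/
lemma comp_coeff_mid (p q : FormalMultilinearSeries ℂ E E)
    (hp1 : p 1 = FormalMultilinearSeries.id ℂ E 0 1)
    (hq1 : q 1 = FormalMultilinearSeries.id ℂ E 0 1)
    {k m : ℕ} (hp : ∀ j, 2 ≤ j → j < k → p j = 0) (hq : ∀ j, 2 ≤ j → j < k → q j = 0)
    (hm2 : 2 ≤ m) (hmk : m ≤ k) :
    (p.comp q) m = p m + q m := by
  have hm0 : 0 < m := by omega
  ext v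
  show (∑ c : Composition m, p.compAlongComposition q c) v = _
  rw [ContinuousMultilinearMap.sum_apply]
  rw [Finset.sum_eq_add_of_mem (Composition.ones m) (Composition.single m hm0)
    (Finset.mem_univ _) (Finset.mem_univ _) ?_ ?_]
  · -- ones gives p m, single gives q m
    have h1 : p.compAlongComposition q (Composition.ones m) v = p m v := by
      rw [compAlongComposition_apply, applyComposition_ones]
      apply p.congr (Composition.ones_length m)
      intro i h1 h2
      simp only [hq1, id_apply_one]
      refine congr_arg v ?_
      rw [Fin.ext_iff, Fin.coe_castLE, Fin.val_mk]
    have h2 : p.compAlongComposition q (Composition.single m hm0) v = q m v := by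
      rw [compAlongComposition_apply, applyComposition_single]
      have : p (Composition.single m hm0).length (fun _ => q m v)
          = p 1 (fun _ => q m v) := p.congr (Composition.single_length hm0) (fun _ _ _ => rfl)
      rw [this, hp1, id_apply_one]
    rw [h1, h2]; rfl
  · -- ones ≠ single
    intro h
    have := congrArg Composition.length h
    rw [Composition.ones_length, Composition.single_length] at this
    omega
  · -- other compositions vanish
    intro c _ ⟨hco, hcs⟩
    obtain ⟨i, hi, hi1⟩ := Composition.ne_ones_iff.1 hco
    rw [← Composition.ofFn_blocksFun, List.mem_ofFn] at hi
    obtain ⟨j, rfl⟩ := hi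
    have hlt : c.blocksFun j < m := (Composition.ne_single_iff hm0).1 hcs j
    have hzero : q (c.blocksFun j) = 0 := hq _ hi1 (lt_of_lt_of_le hlt hmk)
    rw [compAlongComposition_apply]
    apply ContinuousMultilinearMap.map_coord_zero _ j
    show q.applyComposition c v j = 0
    unfold FormalMultilinearSeries.applyComposition
    rw [hzero]
    rfl

lemma fpowerSeries_eq_zero (u : ℂ →L[ℂ] E) {n : ℕ} (hn : 2 ≤ n) :
    u.fpowerSeries 0 n = 0 := by
  obtain ⟨j, rfl⟩ : ∃ j, n = j + 2 := ⟨n - 2, by omega⟩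
  exact u.fpowerSeries_apply_add_two 0 j

/-- Coefficients of a series composed on the right with a linear map. -/
lemma comp_linear_coeff (q : FormalMultilinearSeries ℂ E E) (u : ℂ →L[ℂ] E)
    {m : ℕ} (hm : 0 < m) (v : Fin m → ℂ) :
    (q.comp (u.fpowerSeries 0)) m v = q m (fun i => u (v i)) := by
  show (∑ c : Composition m, q.compAlongComposition (u.fpowerSeries 0) c) v = _
  rw [ContinuousMultilinearMap.sum_apply]
  rw [Finset.sum_eq_single_of_mem (Composition.ones m) (Finset.mem_univ _) ?_]
  · rw [compAlongComposition_apply, applyComposition_ones]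
    apply q.congr (Composition.ones_length m)
    intro i h1 h2
    simp only [ContinuousLinearMap.fpowerSeries_apply_one]
    rw [continuousMultilinearCurryFin1_symm_apply]
    refine congr_arg (fun t => u (v t)) ?_
    rw [Fin.ext_iff, Fin.coe_castLE, Fin.val_mk]
  · intro c _ hco
    obtain ⟨i, hi, hi1⟩ := Composition.ne_ones_iff.1 hco
    rw [← Composition.ofFn_blocksFun, List.mem_ofFn] at hi
    obtain ⟨j, rfl⟩ := hi
    rw [compAlongComposition_apply]
    apply ContinuousMultilinearMap.map_coord_zero _ j
    show (u.fpowerSeries 0).applyComposition c v j = 0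
    unfold FormalMultilinearSeries.applyComposition
    rw [fpowerSeries_eq_zero u hi1]
    rfl

lemma radius_mono {F : Type*} [NormedAddCommGroup F] [NormedSpace ℂ F]
    (p p' : FormalMultilinearSeries ℂ E F) (h : ∀ n, ‖p' n‖ ≤ ‖p n‖) :
    p.radius ≤ p'.radius := by
  refine ENNReal.le_of_forall_nnreal_lt fun r hr => ?_
  obtain ⟨C, hC0, hC⟩ := p.norm_mul_pow_le_of_lt_radius hr
  exact p'.le_radius_of_bound C fun n =>
    le_trans (mul_le_mul_of_nonneg_right (h n) (by positivity)) (hC n)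

/-- If some coefficients of `p` vanish on the diagonal, we may replace them by `0`. -/
lemma hasFPowerSeriesAt_modify {f : E → E} {p p' : FormalMultilinearSeries ℂ E E} {x : E}
    (hf : HasFPowerSeriesAt f p x)
    (h : ∀ n, p' n = p n ∨ (p' n = 0 ∧ ∀ z : E, p n (fun _ => z) = 0)) :
    HasFPowerSeriesAt f p' x := by
  obtain ⟨r, hr⟩ := hf
  have hrad : p.radius ≤ p'.radius := by
    refine radius_mono p p' fun n => ?_
    rcases h n with h' | ⟨h', _⟩ <;> simp [h', norm_nonneg]
  refine ⟨r, ⟨le_trans hr.r_le hrad, hr.r_pos, fun {y} hy => ?_⟩⟩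
  have heq : (fun n => p' n fun _ => y) = fun n => p n fun _ => y := by
    funext n
    rcases h n with h' | ⟨h', hd⟩
    · rw [h']
    · rw [h', hd y]; rfl
  exact heq ▸ hr.hasSum hy


set_option maxHeartbeats 1000000 in
/-- Cartan's uniqueness theorem, fixed-point form: a holomorphic self-map of a bounded
open set fixing `0` with derivative the identity is the identity near `0`. -/
lemma cartan_id [CompleteSpace E] {V : Set E} (hVo : IsOpen V) (hVb : Bornology.IsBounded V) (h0V : (0:E) ∈ V)
    {F : E → E} (hFa : AnalyticOnNhd ℂ F V) (hFV : MapsTo F V V) (hF0 : F 0 = 0)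
    (hFd : fderiv ℂ F 0 = ContinuousLinearMap.id ℂ E) :
    ∀ᶠ y in nhds (0:E), F y = y := by
  obtain ⟨p, hp⟩ := hFa 0 h0V
  have hp1 : p 1 = FormalMultilinearSeries.id ℂ E 0 1 := by
    have h1 : continuousMultilinearCurryFin1 ℂ E E (p 1) = ContinuousLinearMap.id ℂ E := by
      rw [← hp.fderiv_eq, hFd]
    calc p 1 = (continuousMultilinearCurryFin1 ℂ E E).symm
          (continuousMultilinearCurryFin1 ℂ E E (p 1)) :=
        ((continuousMultilinearCurryFin1 ℂ E E).symm_apply_apply (p 1)).symm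
      _ = (continuousMultilinearCurryFin1 ℂ E E).symm (ContinuousLinearMap.id ℂ E) := by rw [h1]
      _ = FormalMultilinearSeries.id ℂ E 0 1 := rfl
  -- bounds and geometry
  obtain ⟨M, hM⟩ := isBounded_iff_forall_norm_le.1 hVb
  have hM0 : 0 ≤ M := le_trans (norm_nonneg _) (hM 0 h0V)
  obtain ⟨ε, hε, hballV⟩ := Metric.isOpen_iff.1 hVo 0 h0V
  set δ : ℝ := ε / 2 with hδdef
  have hδ : 0 < δ := by positivity
  have hδV : Metric.closedBall (0:E) δ ⊆ V :=
    (Metric.closedBall_subset_ball (by simp [hδdef]; linarith)).trans hballV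
  -- iterates are analytic self-maps
  have hiter : ∀ n : ℕ, AnalyticOnNhd ℂ (F^[n]) V ∧ MapsTo (F^[n]) V V := by
    intro n
    induction n with
    | zero => exact ⟨by rw [Function.iterate_zero]; exact analyticOnNhd_id, by simp [mapsTo_id]⟩
    | succ n IH =>
      rw [Function.iterate_succ']
      exact ⟨hFa.comp IH.1 IH.2, hFV.comp IH.2⟩
  -- all higher coefficients vanish on the diagonal
  have diag : ∀ k, 2 ≤ k → ∀ z : E, p k (fun _ => z) = 0 := by
    intro k
    induction k using Nat.strong_induction_on with
    | _ k IH =>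
    intro hk2 z
    classical
    set p' : FormalMultilinearSeries ℂ E E :=
      fun n => if 2 ≤ n ∧ n < k then 0 else p n with hp'def
    have hp' : HasFPowerSeriesAt F p' 0 := by
      refine hasFPowerSeriesAt_modify hp fun n => ?_
      by_cases h : 2 ≤ n ∧ n < k
      · exact Or.inr ⟨if_pos h, fun z => IH n h.2 h.1 z⟩
      · exact Or.inl (if_neg h)
    have p'1 : p' 1 = FormalMultilinearSeries.id ℂ E 0 1 := by
      rw [hp'def]; simp only []; rw [if_neg (by omega)]; exact hp1
    have p'k : p' k = p k := by rw [hp'def]; simp only []; rw [if_neg (by omega)]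
    have p'mid : ∀ j, 2 ≤ j → j < k → p' j = 0 := fun j h1 h2 => by
      rw [hp'def]; simp only []; rw [if_pos ⟨h1, h2⟩]
    -- iterates have series with k-th coefficient (n+1) • p' k
    have key : ∀ n : ℕ, ∃ q : FormalMultilinearSeries ℂ E E,
        HasFPowerSeriesAt (F^[n+1]) q 0 ∧ q 1 = FormalMultilinearSeries.id ℂ E 0 1 ∧
        (∀ j, 2 ≤ j → j < k → q j = 0) ∧ q k = (n+1) • p' k := by
      intro n
      induction n with
      | zero => exact ⟨p', by simpa using hp', p'1, p'mid, (one_smul ℕ (p' k)).symm⟩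
      | succ n IHn =>
        obtain ⟨q, hq, hq1, hqmid, hqk⟩ := IHn
        refine ⟨p'.comp q, ?_, ?_, ?_, ?_⟩
        · rw [Function.iterate_succ']
          have hfix : F^[n+1] (0:E) = 0 := Function.iterate_fixed hF0 (n+1)
          have hp'' : HasFPowerSeriesAt F p' (F^[n+1] 0) := by rw [hfix]; exact hp'
          exact hp''.comp hq
        · ext v
          rw [comp_coeff_one, hq1, id_apply_one, p'1, id_apply_one]
        · intro j h1 h2
          rw [comp_coeff_mid p' q p'1 hq1 p'mid hqmid h1 h2.le, p'mid j h1 h2,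
            hqmid j h1 h2, add_zero]
        · rw [comp_coeff_mid p' q p'1 hq1 p'mid hqmid hk2 le_rfl, hqk,
            succ_nsmul (p' k) (n+1), add_comm]
    -- now the Cauchy estimates
    rcases eq_or_ne z 0 with rfl | hz
    · exact (p k).map_coord_zero ⟨0, by omega⟩ rfl
    have hznorm : 0 < ‖z‖ := norm_pos_iff.2 hz
    set R : ℝ := δ / ‖z‖ with hRdef
    have hR : 0 < R := by positivity
    set L : ℂ →L[ℂ] E := (ContinuousLinearMap.id ℂ ℂ).smulRight z with hLdef
    have hLapp : ∀ t : ℂ, L t = t • z := fun t => rfl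
    have hmapsL : ∀ t : ℂ, t ∈ Metric.closedBall (0:ℂ) R → L t ∈ V := by
      intro t ht
      apply hδV
      rw [Metric.mem_closedBall, dist_zero_right] at ht ⊢
      rw [hLapp, norm_smul]
      calc ‖t‖ * ‖z‖ ≤ R * ‖z‖ := by gcongr
        _ = δ := div_mul_cancel₀ δ hznorm.ne'
    have bound : ∀ n : ℕ, ((n:ℝ)+1) * ‖p' k fun _ => z‖ ≤ M * R⁻¹ ^ k := by
      intro n
      obtain ⟨q, hq, hq1, hqmid, hqk⟩ := key n
      set φ : ℂ → E := F^[n+1] ∘ L with hφdef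
      have hq' : HasFPowerSeriesAt (F^[n+1]) q (L 0) := by rw [map_zero]; exact hq
      have hφat : HasFPowerSeriesAt φ (q.comp (L.fpowerSeries 0)) 0 :=
        hq'.comp (L.hasFPowerSeriesAt 0)
      have hRnn : (0:ℝ) < R := hR
      set Rnn : NNReal := ⟨R, hR.le⟩ with hRnndef
      have hdiff : DifferentiableOn ℂ φ (Metric.closedBall (0:ℂ) Rnn) := by
        refine DifferentiableOn.comp ((hiter (n+1)).1.differentiableOn)
          (L.differentiable.differentiableOn) ?_
        intro t ht
        exact hmapsL t ht
      have hφball : HasFPowerSeriesOnBall φ (cauchyPowerSeries φ 0 Rnn) 0 Rnn :=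
        hdiff.hasFPowerSeriesOnBall (by exact_mod_cast hR)
      have heq : q.comp (L.fpowerSeries 0) = cauchyPowerSeries φ 0 Rnn :=
        hφat.eq_formalMultilinearSeries hφball.hasFPowerSeriesAt
      have hval : (q.comp (L.fpowerSeries 0)) k (fun _ => (1:ℂ)) = q k fun _ => z := by
        rw [comp_linear_coeff q L (by omega) (fun _ => (1:ℂ))]
        congr 1
        funext i
        rw [hLapp, one_smul]
      have hcirc : ∀ θ : ℝ, φ (circleMap 0 Rnn θ) ∈ V := by
        intro θ
        exact (hiter (n+1)).2 (hmapsL _ (circleMap_mem_closedBall 0 hR.le θ))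
      have hint : (∫ θ : ℝ in (0:ℝ)..2 * Real.pi, ‖φ (circleMap 0 Rnn θ)‖) ≤ 2 * Real.pi * M := by
        have h1 : ‖∫ θ : ℝ in (0:ℝ)..2 * Real.pi, ‖φ (circleMap 0 Rnn θ)‖‖ ≤
            M * |2 * Real.pi - 0| := by
          apply intervalIntegral.norm_integral_le_of_norm_le_const
          intro x _
          rw [Real.norm_eq_abs, abs_of_nonneg (norm_nonneg _)]
          exact hM _ (hcirc x)
        rw [Real.norm_eq_abs] at h1
        calc (∫ θ : ℝ in (0:ℝ)..2 * Real.pi, ‖φ (circleMap 0 Rnn θ)‖)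
            ≤ |∫ θ : ℝ in (0:ℝ)..2 * Real.pi, ‖φ (circleMap 0 Rnn θ)‖| := le_abs_self _
          _ ≤ M * |2 * Real.pi - 0| := h1
          _ = 2 * Real.pi * M := by
              rw [sub_zero, abs_of_pos Real.two_pi_pos]; ring
      have hnormcoeff : ‖q k fun _ => z‖ ≤ M * R⁻¹ ^ k := by
        calc ‖q k fun _ => z‖ = ‖(cauchyPowerSeries φ 0 Rnn) k (fun _ => (1:ℂ))‖ := by
              rw [← hval, heq]
          _ ≤ ‖(cauchyPowerSeries φ 0 Rnn) k‖ * ∏ _i : Fin k, ‖(1:ℂ)‖ :=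
              ContinuousMultilinearMap.le_opNorm _ _
          _ = ‖(cauchyPowerSeries φ 0 Rnn) k‖ := by simp
          _ ≤ ((2 * Real.pi)⁻¹ * ∫ θ : ℝ in (0:ℝ)..2 * Real.pi,
                ‖φ (circleMap 0 Rnn θ)‖) * |(Rnn:ℝ)|⁻¹ ^ k :=
              norm_cauchyPowerSeries_le φ 0 Rnn k
          _ ≤ ((2 * Real.pi)⁻¹ * (2 * Real.pi * M)) * R⁻¹ ^ k := by
              have hRabs : |(Rnn:ℝ)| = R := abs_of_pos hR
              rw [hRabs]
              apply mul_le_mul_of_nonneg_right _ (by positivity)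
              exact mul_le_mul_of_nonneg_left hint (by positivity)
          _ = M * R⁻¹ ^ k := by
              rw [inv_mul_cancel_left₀ Real.two_pi_pos.ne']
      calc ((n:ℝ)+1) * ‖p' k fun _ => z‖ = ‖q k fun _ => z‖ := by
            rw [hqk, ContinuousMultilinearMap.smul_apply,
              ← Nat.cast_smul_eq_nsmul ℝ, norm_smul, Real.norm_natCast]
            push_cast
            ring
        _ ≤ M * R⁻¹ ^ k := hnormcoeff
    -- conclude
    rw [← p'k]
    by_contra hne
    have ha : 0 < ‖p' k fun _ => z‖ := norm_pos_iff.2 hne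
    obtain ⟨n, hn⟩ := exists_nat_gt ((M * R⁻¹ ^ k) / ‖p' k fun _ => z‖)
    have := bound n
    rw [div_lt_iff₀ ha] at hn
    nlinarith [bound n]
  -- finish: `F = id` on the ball of convergence
  obtain ⟨r, hball⟩ := hp
  have hFy : ∀ y ∈ EMetric.ball (0:E) r, F y = y := by
    intro y hy
    have hsum := hball.hasSum (y := y) (by simpa [edist_zero_right] using Metric.mem_eball.1 hy)
    have h2 : HasSum (fun n : ℕ => p n fun _ => y) ((fun n : ℕ => p n fun _ => y) 1) := by
      apply hasSum_single
      intro b hb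
      match b, hb with
      | 0, _ => simpa [hF0] using hball.coeff_zero fun _ => y
      | (m+2), _ => rw [diag (m+2) (by omega) y]
    have h3 := hsum.unique h2
    simpa [hp1] using h3
  exact Filter.eventually_of_mem (EMetric.ball_mem_nhds 0 hball.r_pos) hFy

end CartanAux

/-- Let `V, W` be bounded connected open subsets of a finite-dimensional complex
vector space `E`, both containing `0`. If `Φ : V → W` is a biholomorphism and
`Ψ : V → W` is holomorphic with `Ψ 0 = Φ 0` and `D₀Ψ = D₀Φ`, then `Ψ = Φ` on `V`. -/
theorem cartan_uniqueness {E : Type*} [NormedAddCommGroup E] [NormedSpace ℂ E]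
    [FiniteDimensional ℂ E] (V W : Set E)
    (hVo : IsOpen V) (hVb : Bornology.IsBounded V) (hVc : IsConnected V) (h0V : (0 : E) ∈ V)
    (hWo : IsOpen W) (hWb : Bornology.IsBounded W) (hWc : IsConnected W) (h0W : (0 : E) ∈ W)
    (Φ Ψ : E → E)
    (hΦa : AnalyticOnNhd ℂ Φ V) (hΦbij : Set.BijOn Φ V W)
    (hΦinv : ∃ g : E → E, AnalyticOnNhd ℂ g W ∧ (∀ v ∈ V, g (Φ v) = v) ∧
      ∀ w ∈ W, Φ (g w) = w)
    (hΨa : AnalyticOnNhd ℂ Ψ V) (hΨW : Set.MapsTo Ψ V W)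
    (h0 : Ψ 0 = Φ 0) (hD : fderiv ℂ Ψ 0 = fderiv ℂ Φ 0) :
    ∀ v ∈ V, Ψ v = Φ v := by
  obtain ⟨g, hga, hgl, hgr⟩ := hΦinv
  have hΦ0W : Φ 0 ∈ W := hΦbij.mapsTo h0V
  -- `g` maps `W` into `V`
  have hgV : MapsTo g W V := by
    intro w hw
    obtain ⟨v, hv, rfl⟩ := hΦbij.surjOn hw
    rw [hgl v hv]; exact hv
  set F : E → E := g ∘ Ψ with hFdef
  have hFa : AnalyticOnNhd ℂ F V := hga.comp hΨa hΨW
  have hFV : MapsTo F V V := hgV.comp hΨW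
  have hF0 : F 0 = 0 := by
    show g (Ψ 0) = 0
    rw [h0, hgl 0 h0V]
  -- the derivative of `F` at `0` is the identity
  have hgΦ : ∀ᶠ x in nhds (0:E), (g ∘ Φ) x = id x := by
    filter_upwards [hVo.mem_nhds h0V] with x hx
    exact hgl x hx
  have hdgΦ : (fderiv ℂ g (Φ 0)).comp (fderiv ℂ Φ 0) = ContinuousLinearMap.id ℂ E := by
    have hΦd : DifferentiableAt ℂ Φ 0 := (hΦa 0 h0V).differentiableAt
    have hgd : DifferentiableAt ℂ g (Φ 0) := (hga _ hΦ0W).differentiableAt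
    have := fderiv_comp (𝕜 := ℂ) 0 hgd hΦd
    rw [← this, Filter.EventuallyEq.fderiv_eq hgΦ, fderiv_id]
  have hFd : fderiv ℂ F 0 = ContinuousLinearMap.id ℂ E := by
    have hΨd : DifferentiableAt ℂ Ψ 0 := (hΨa 0 h0V).differentiableAt
    have hgd : DifferentiableAt ℂ g (Ψ 0) := by
      rw [h0]; exact (hga _ hΦ0W).differentiableAt
    have := fderiv_comp (𝕜 := ℂ) 0 hgd hΨd
    rw [hFdef, this, hD, h0, hdgΦ]
  -- Cartan's lemma : `F = id` near `0`, hence on `V` by analytic continuation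
  have hev : ∀ᶠ y in nhds (0:E), F y = y := CartanAux.cartan_id hVo hVb h0V hFa hFV hF0 hFd
  have heq : EqOn F id V := by
    refine AnalyticOnNhd.eqOn_of_preconnected_of_eventuallyEq hFa analyticOnNhd_id
      hVc.isPreconnected h0V ?_
    exact hev
  intro v hv
  have h1 : g (Ψ v) = v := heq hv
  have h2 : Φ (g (Ψ v)) = Ψ v := hgr _ (hΨW hv)
  rw [h1] at h2
  exact h2.symm
end
end

section
/- Böttcher's theorem: If f : (ℂ,0) → (ℂ,0) is a holomorphic germ of the form f(z) = a z^k + O(z^{k+1}) with a ≠ 0 and k ≥ 2, then there exists a holomorphic germ φ : (ℂ,0) → (ℂ,0) with φ(0) = 0 and φ'(0) = 1 such that φ(f(z)) = a·(φ(z))^k for all z in some neighborhood of 0. -/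
open Filter Asymptotics

lemma factor_bigO (F : ℂ → ℂ) (hF : AnalyticAt ℂ F 0) (m : ℕ)
    (h : F =O[nhds (0 : ℂ)] fun z => z ^ m) :
    ∃ g : ℂ → ℂ, AnalyticAt ℂ g 0 ∧ ∀ᶠ z in nhds (0 : ℂ), F z = z ^ m * g z := by
  by_cases h0 : ∀ᶠ z in nhds (0 : ℂ), F z = 0
  · exact ⟨fun _ => 0, analyticAt_const, h0.mono fun z hz => by simp [hz]⟩
  · obtain ⟨n, g0, hg0, hg0ne, hg0eq⟩ :=
      hF.exists_eventuallyEq_pow_smul_nonzero_iff.mpr h0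
    simp only [sub_zero, smul_eq_mul] at hg0eq
    have hmn : m ≤ n := by
      by_contra hlt
      push_neg at hlt
      obtain ⟨C, hC⟩ := h.bound
      apply hg0ne
      have key : ∀ᶠ z in nhdsWithin (0 : ℂ) {0}ᶜ, ‖g0 z‖ ≤ |C| * ‖z‖ := by
        have h1le : ∀ᶠ z in nhds (0 : ℂ), ‖z‖ ≤ 1 := by
          have := Metric.ball_mem_nhds (0 : ℂ) one_pos
          filter_upwards [this] with z hz
          exact le_of_lt (by simpa [Metric.mem_ball] using hz)
        filter_upwards [nhdsWithin_le_nhds hC, nhdsWithin_le_nhds hg0eq,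
          nhdsWithin_le_nhds h1le, self_mem_nhdsWithin] with z h1 h2 hz1 (h3 : z ≠ 0)
        rw [h2] at h1
        have hzpos : (0:ℝ) < ‖z‖ ^ n := pow_pos (norm_pos_iff.mpr h3) n
        have step : ‖z‖ ^ n * ‖g0 z‖ ≤ ‖z‖ ^ n * (|C| * ‖z‖) := by
          calc ‖z‖ ^ n * ‖g0 z‖ ≤ C * ‖z‖ ^ m := by
                simpa [norm_mul, norm_pow] using h1
            _ ≤ |C| * ‖z‖ ^ m := by
                apply mul_le_mul_of_nonneg_right (le_abs_self C) (by positivity)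
            _ = |C| * (‖z‖ ^ n * ‖z‖ ^ (m - n)) := by
                rw [← pow_add]; congr 2; omega
            _ ≤ |C| * (‖z‖ ^ n * ‖z‖) := by
                have : ‖z‖ ^ (m - n) ≤ ‖z‖ ^ 1 :=
                  pow_le_pow_of_le_one (norm_nonneg z) hz1 (by omega)
                gcongr
                simpa using this
            _ = ‖z‖ ^ n * (|C| * ‖z‖) := by ring
        exact le_of_mul_le_mul_left step hzpos
      have t1 : Filter.Tendsto g0 (nhdsWithin (0 : ℂ) {0}ᶜ) (nhds (g0 0)) :=
        (hg0.continuousAt.continuousWithinAt).tendsto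
      have t2 : Filter.Tendsto g0 (nhdsWithin (0 : ℂ) {0}ᶜ) (nhds 0) := by
        apply squeeze_zero_norm' key
        have : Filter.Tendsto (fun z : ℂ => |C| * ‖z‖) (nhds (0:ℂ)) (nhds (|C| * ‖(0:ℂ)‖)) := by
          exact (continuous_norm.continuousAt).const_mul _
        simpa using this.mono_left nhdsWithin_le_nhds
      exact tendsto_nhds_unique t1 t2
    refine ⟨fun z => z ^ (n - m) * g0 z, (analyticAt_id.pow _).mul hg0, ?_⟩
    filter_upwards [hg0eq] with z hz
    rw [hz, ← mul_assoc, ← pow_add]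
    congr 2
    omega

/-- **Böttcher's theorem.** If `f : (ℂ,0) → (ℂ,0)` is a holomorphic germ with
`f z = a z^k + O(z^(k+1))`, `a ≠ 0`, `k ≥ 2`, then there is a holomorphic germ
`φ` with `φ 0 = 0`, `φ' 0 = 1`, conjugating `f` to `w ↦ a w^k` near `0`. -/
theorem boettcher (f : ℂ → ℂ) (a : ℂ) (ha : a ≠ 0) (k : ℕ) (hk : 2 ≤ k)
    (hf : AnalyticAt ℂ f 0) (hf0 : f 0 = 0)
    (hexp : (fun z => f z - a * z ^ k) =O[nhds (0 : ℂ)] fun z => z ^ (k + 1)) :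
    ∃ φ : ℂ → ℂ, AnalyticAt ℂ φ 0 ∧ φ 0 = 0 ∧ deriv φ 0 = 1 ∧
      ∀ᶠ z in nhds (0 : ℂ), φ (f z) = a * (φ z) ^ k := by
  -- Step 1: f z = a z^k (1 + u z) with u analytic, u 0 = 0
  obtain ⟨g, hg, hfg⟩ := factor_bigO (fun z => f z - a * z ^ k)
    (hf.sub ((analyticAt_const.mul (analyticAt_id.pow k)))) (k+1) hexp
  set u : ℂ → ℂ := fun z => z * g z / a with hu_def
  have hu : AnalyticAt ℂ u 0 := (analyticAt_id.mul hg).div analyticAt_const ha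
  have hu0 : u 0 = 0 := by simp [hu_def]
  have hfu : ∀ᶠ z in nhds (0 : ℂ), f z = a * z ^ k * (1 + u z) := by
    filter_upwards [hfg] with z hz
    have e : a * z ^ k * (1 + z * g z / a) = a * z ^ k + z ^ (k+1) * g z := by
      field_simp
      ring
    simp only [hu_def]
    rw [e]
    linear_combination hz
  -- Step 2: choose a good ball
  have hsmall : ∀ᶠ z in nhds (0 : ℂ), ‖a‖ * ‖z‖ ^ (k-1) * (3/2) ≤ 1 := by
    have hco : ContinuousAt (fun z : ℂ => ‖a‖ * ‖z‖ ^ (k-1) * (3/2)) 0 := by fun_prop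
    have h00 : ‖a‖ * ‖(0:ℂ)‖ ^ (k-1) * (3/2) < 1 := by
      simp only [norm_zero]
      rw [zero_pow (by omega)]
      norm_num
    filter_upwards [hco.tendsto.eventually_lt_const h00] with z hz
    exact hz.le
  have husmall : ∀ᶠ z in nhds (0 : ℂ), ‖u z‖ ≤ 1/2 := by
    have hc := hu.continuousAt
    rw [ContinuousAt, hu0] at hc
    filter_upwards [hc (Metric.closedBall_mem_nhds (0:ℂ) (by norm_num : (0:ℝ) < 1/2))] with z hz
    simpa [Metric.mem_closedBall, dist_zero_right] using hz
  obtain ⟨r, hr, hball⟩ : ∃ r > 0, ∀ z ∈ Metric.ball (0:ℂ) r,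
      AnalyticAt ℂ f z ∧ AnalyticAt ℂ u z ∧ f z = a * z ^ k * (1 + u z) ∧
      ‖u z‖ ≤ 1/2 ∧ ‖a‖ * ‖z‖ ^ (k-1) * (3/2) ≤ 1 := by
    rw [← Metric.eventually_nhds_iff_ball]
    filter_upwards [hf.eventually_analyticAt, hu.eventually_analyticAt, hfu, husmall, hsmall] with
      z h1 h2 h3 h4 h5
    exact ⟨h1, h2, h3, h4, h5⟩
  set B := Metric.ball (0:ℂ) r with hB
  have hmem : ∀ z ∈ B, ‖z‖ < r := fun z hz => by simpa [hB, Metric.mem_ball] using hz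
  -- f maps B into B
  have hcontract : ∀ z ∈ B, ‖f z‖ ≤ ‖z‖ := by
    intro z hz
    obtain ⟨-, -, h3, h4, h5⟩ := hball z hz
    rw [h3]
    calc ‖a * z ^ k * (1 + u z)‖ = ‖a‖ * ‖z‖ ^ k * ‖1 + u z‖ := by
          simp [norm_mul, norm_pow]
      _ ≤ ‖a‖ * ‖z‖ ^ k * (3/2) := by
          gcongr
          calc ‖1 + u z‖ ≤ 1 + ‖u z‖ := by simpa using norm_add_le (1:ℂ) (u z)
            _ ≤ 1 + 1/2 := by linarith
            _ = 3/2 := by norm_num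
      _ = (‖a‖ * ‖z‖ ^ (k-1) * (3/2)) * ‖z‖ := by
          have e : ‖z‖ ^ k = ‖z‖ ^ (k-1) * ‖z‖ := by
            rw [← pow_succ]
            congr 1
            omega
          rw [e]; ring
      _ ≤ 1 * ‖z‖ := by gcongr
      _ = ‖z‖ := one_mul _
  have hmaps : ∀ z ∈ B, f z ∈ B := by
    intro z hz
    rw [hB, Metric.mem_ball, dist_zero_right]
    exact lt_of_le_of_lt (hcontract z hz) (hmem z hz)
  have hiter : ∀ n, ∀ z ∈ B, f^[n] z ∈ B := by
    intro n
    induction n with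
    | zero => intro z hz; simpa using hz
    | succ n ih => intro z hz; rw [Function.iterate_succ_apply]; exact ih _ (hmaps z hz)
  have hiter_diff : ∀ n, ∀ z ∈ B, DifferentiableAt ℂ (f^[n]) z := by
    intro n
    induction n with
    | zero => intro z hz; simpa using differentiableAt_id
    | succ n ih =>
      intro z hz
      rw [Function.iterate_succ']
      exact ((hball _ (hiter n z hz)).1.differentiableAt).comp z (ih z hz)
  -- the log term
  set L : ℂ → ℂ := fun z => Complex.log (1 + u z) with hL_def
  have h1u_re : ∀ z ∈ B, (1/2 : ℝ) ≤ (1 + u z).re := by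
    intro z hz
    have h4 := (hball z hz).2.2.2.1
    have : |(u z).re| ≤ ‖u z‖ := Complex.abs_re_le_norm _
    simp only [Complex.add_re, Complex.one_re]
    have := abs_le.mp (this.trans h4)
    linarith [this.1]
  have h1u_slit : ∀ z ∈ B, (1 + u z) ∈ Complex.slitPlane := by
    intro z hz
    exact Complex.mem_slitPlane_iff.mpr (Or.inl (by linarith [h1u_re z hz]))
  have h1u_ne : ∀ z ∈ B, (1 : ℂ) + u z ≠ 0 := by
    intro z hz h
    have := h1u_re z hz
    rw [h] at this
    simp at this
    linarith
  have hL_an : ∀ z ∈ B, AnalyticAt ℂ L z := by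
    intro z hz
    have hinner : AnalyticAt ℂ (fun w => (1:ℂ) + u w) z :=
      analyticAt_const.add (hball z hz).2.1
    exact AnalyticAt.comp (f := fun w => (1:ℂ) + u w) (x := z)
      (analyticAt_clog (h1u_slit z hz)) hinner
  have hL_bound : ∀ z ∈ B, ‖L z‖ ≤ 1 := by
    intro z hz
    have := Complex.norm_log_one_add_half_le_self (z := u z) (by
      simpa using (hball z hz).2.2.2.1)
    simp only [hL_def]
    refine this.trans ?_
    have := (hball z hz).2.2.2.1
    linarith
  have hL0 : L 0 = 0 := by simp [hL_def, hu0]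
  -- the series
  have hkpos : (0:ℝ) < k := by positivity
  have hknorm : ∀ n : ℕ, ‖((k:ℂ))^n‖ = (k:ℝ)^n := by
    intro n; rw [norm_pow]; norm_num
  set term : ℕ → ℂ → ℂ := fun n z => L (f^[n] z) / (k:ℂ)^(n+1) with hterm_def
  have hterm_bound : ∀ n, ∀ z ∈ B, ‖term n z‖ ≤ (1/2)^(n+1) := by
    intro n z hz
    rw [hterm_def]
    simp only [norm_div, hknorm]
    rw [div_le_iff₀ (by positivity)]
    calc ‖L (f^[n] z)‖ ≤ 1 := hL_bound _ (hiter n z hz)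
      _ ≤ (1/2)^(n+1) * 2^(n+1) := by
          rw [← mul_pow]; norm_num
      _ ≤ (1/2)^(n+1) * (k:ℝ)^(n+1) := by
          gcongr
          exact_mod_cast hk
  have hsum_geom : Summable (fun n : ℕ => ((1:ℝ)/2)^(n+1)) := by
    apply Summable.comp_injective (summable_geometric_of_lt_one (by norm_num) (by norm_num))
      (add_left_injective 1)
  set h : ℂ → ℂ := fun z => ∑' n, term n z with hh_def
  have hsummable : ∀ z ∈ B, Summable (fun n => term n z) := by
    intro z hz
    exact Summable.of_norm_bounded hsum_geom (fun n => hterm_bound n z hz)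
  have hTU : TendstoUniformlyOn (fun N z => ∑ n ∈ Finset.range N, term n z) h atTop B :=
    tendstoUniformlyOn_tsum_nat hsum_geom hterm_bound
  have hBopen : IsOpen B := Metric.isOpen_ball
  have hdiff_h : DifferentiableOn ℂ h B := by
    apply hTU.tendstoLocallyUniformlyOn.differentiableOn ?_ hBopen
    apply Filter.Eventually.of_forall
    intro N
    apply DifferentiableOn.fun_sum
    intro n _
    intro z hz
    apply DifferentiableAt.differentiableWithinAt
    apply DifferentiableAt.div_const
    exact ((hL_an _ (hiter n z hz)).differentiableAt).comp z (hiter_diff n z hz)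
  have hBmem : B ∈ nhds (0:ℂ) := hBopen.mem_nhds (by simp [hB, hr])
  have h_an : AnalyticAt ℂ h 0 := hdiff_h.analyticAt hBmem
  have hfix : ∀ n : ℕ, f^[n] 0 = 0 := fun n => Function.iterate_fixed hf0 n
  have h0 : h 0 = 0 := by
    rw [hh_def]
    simp only [hterm_def]
    have : ∀ n : ℕ, L (f^[n] (0:ℂ)) / (k:ℂ)^(n+1) = 0 := by
      intro n; rw [hfix n, hL0, zero_div]
    simp only [this, tsum_zero]
  have hkne : ((k:ℂ)) ≠ 0 := Nat.cast_ne_zero.mpr (by omega)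
  -- functional equation for h
  have heq : ∀ z ∈ B, h (f z) = k * h z - L z := by
    intro z hz
    have hS : Summable (fun n : ℕ => L (f^[n] z) / (k:ℂ)^n) := by
      apply Summable.of_norm_bounded (g := fun n : ℕ => ((1:ℝ)/2)^n)
        (summable_geometric_of_lt_one (by norm_num) (by norm_num))
      intro n
      simp only [norm_div, hknorm]
      rw [div_le_iff₀ (by positivity)]
      calc ‖L (f^[n] z)‖ ≤ 1 := hL_bound _ (hiter n z hz)
        _ ≤ (1/2)^n * 2^n := by rw [← mul_pow]; norm_num
        _ ≤ (1/2)^n * (k:ℝ)^n := by gcongr; exact_mod_cast hk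
    have e1 : (k:ℂ) * h z = ∑' n, L (f^[n] z) / (k:ℂ)^n := by
      rw [hh_def, ← tsum_mul_left]
      congr 1
      funext n
      simp only [hterm_def]
      rw [eq_div_iff (pow_ne_zero n hkne), pow_succ]
      field_simp
    have e2 : (∑' n : ℕ, L (f^[n+1] z) / (k:ℂ)^(n+1)) = h (f z) := by
      rw [hh_def]
      simp only [hterm_def]
      congr 1
    rw [eq_sub_iff_add_eq, e1, Summable.tsum_eq_zero_add hS]
    simp only [Function.iterate_zero_apply, pow_zero, div_one]
    rw [e2, add_comm]
  -- define φ
  refine ⟨fun z => z * Complex.exp (h z), analyticAt_id.mul (analyticAt_cexp.comp h_an), by simp, ?_, ?_⟩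
  · have hd : HasDerivAt (fun z => z * Complex.exp (h z))
        (1 * Complex.exp (h 0) + 0 * (Complex.exp (h 0) * deriv h 0)) 0 := by
      apply (hasDerivAt_id 0).mul
      exact (h_an.differentiableAt.hasDerivAt).cexp
    rw [hd.deriv, h0]
    simp
  · filter_upwards [hBmem] with z hz
    obtain ⟨-, -, h3, -, -⟩ := hball z hz
    have hfz : f z ∈ B := hmaps z hz
    have expL : Complex.exp (L z) = 1 + u z := Complex.exp_log (h1u_ne z hz)
    rw [heq z hz]
    rw [Complex.exp_sub, expL, h3]
    rw [show ((k:ℂ)) * h z = ((k:ℕ):ℂ) * h z from rfl, Complex.exp_nat_mul]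
    rw [mul_pow]
    field_simp [h1u_ne z hz]
end

section
/- Let H : L → L be a nondegenerate homogeneous map of degree k ≥ 2 on a finite-dimensional complex normed space L. Then the sequence of functions G^n(v) = (1/k^n)·log‖H^{∘n}(v)‖ converges uniformly on L ∖ {0} to a function G satisfying G(v) = log‖v‖ + O(1) and G(H(v)) = k·G(v). -/
open Filter

/-- **Dynamical Green function of a nondegenerate homogeneous map.**
The functions `G^n v = (1/k^n) log ‖H^[n] v‖` converge uniformly on `L \ {0}` to a
function `G` with `G v = log ‖v‖ + O(1)` and `G (H v) = k • G v`. -/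
theorem green_function_exists {L : Type*} [NormedAddCommGroup L] [NormedSpace ℂ L]
    [FiniteDimensional ℂ L] (H : L → L) (hHc : Continuous H) (k : ℕ) (hk : 2 ≤ k)
    (hhom : ∀ (lam : ℂ) (v : L), H (lam • v) = lam ^ k • H v)
    (hnd : ∀ v, H v = 0 → v = 0) :
    ∃ G : L → ℝ,
      TendstoUniformlyOn (fun n v => (1 / (k : ℝ) ^ n) * Real.log ‖H^[n] v‖) G atTop
        {v : L | v ≠ 0} ∧
      (∃ C : ℝ, ∀ v : L, v ≠ 0 → |G v - Real.log ‖v‖| ≤ C) ∧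
      ∀ v : L, v ≠ 0 → G (H v) = (k : ℝ) * G v := by
  have hk0 : (0 : ℝ) < (k : ℝ) := by positivity
  set c : ℝ := 1 / (k : ℝ) with hc_def
  have hc0 : 0 < c := by positivity
  have hc1 : c < 1 := by
    rw [hc_def, div_lt_one hk0]
    exact_mod_cast lt_of_lt_of_le one_lt_two hk
  have hkc : (k : ℝ) * c = 1 := by
    rw [hc_def, mul_one_div_cancel hk0.ne']
  -- nondegeneracy
  have hne : ∀ v : L, v ≠ 0 → H v ≠ 0 := fun v hv hHv => hv (hnd v hHv)
  have hiter : ∀ (v : L), v ≠ 0 → ∀ n, H^[n] v ≠ 0 := by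
    intro v hv n
    induction n with
    | zero => simpa using hv
    | succ n ih => rw [Function.iterate_succ_apply']; exact hne _ ih
  -- the defect function
  set g : L → ℝ := fun v => Real.log ‖H v‖ - (k : ℝ) * Real.log ‖v‖ with hg_def
  -- scale invariance of g
  have hgscale : ∀ (t : ℝ), 0 < t → ∀ v : L, v ≠ 0 → g (t • v) = g v := by
    intro t ht v hv
    have htc : ((t : ℂ)) • v = t • v := by
      simp [Complex.coe_smul]
    have hHt : H (t • v) = ((t : ℂ) ^ k) • H v := by
      rw [← htc, hhom]
    have hnorm1 : ‖H (t • v)‖ = t ^ k * ‖H v‖ := by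
      rw [hHt, norm_smul]
      simp [abs_of_pos ht]
    have hnorm2 : ‖t • v‖ = t * ‖v‖ := by
      rw [norm_smul, Real.norm_eq_abs, abs_of_pos ht]
    have hHv : ‖H v‖ ≠ 0 := norm_ne_zero_iff.mpr (hne v hv)
    have hv0 : ‖v‖ ≠ 0 := norm_ne_zero_iff.mpr hv
    simp only [hg_def, hnorm1, hnorm2]
    rw [Real.log_mul (by positivity) hHv, Real.log_mul (ne_of_gt ht) hv0,
      Real.log_pow]
    ring
  -- boundedness of g
  obtain ⟨M, hM⟩ : ∃ M : ℝ, ∀ v : L, v ≠ 0 → |g v| ≤ M := by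
    have hSc : IsCompact (Metric.sphere (0 : L) 1) := isCompact_sphere 0 1
    have hcont : ContinuousOn (fun v : L => Real.log ‖H v‖) (Metric.sphere (0 : L) 1) := by
      intro v hv
      have hv1 : ‖v‖ = 1 := by simpa using hv
      have hv0 : v ≠ 0 := by
        intro h; rw [h] at hv1; simp at hv1
      have h1 : ContinuousAt (fun x : L => ‖H x‖) v := hHc.norm.continuousAt
      have h2 : ContinuousAt (fun v : L => Real.log ‖H v‖) v :=
        h1.log (norm_ne_zero_iff.mpr (hne v hv0))
      exact h2.continuousWithinAt
    obtain ⟨M, hM0⟩ := hSc.exists_bound_of_continuousOn hcont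
    refine ⟨M, fun v hv => ?_⟩
    set u : L := ‖v‖⁻¹ • v with hu_def
    have hvnorm : (0 : ℝ) < ‖v‖ := norm_pos_iff.mpr hv
    have hu1 : ‖u‖ = 1 := by
      rw [hu_def, norm_smul, Real.norm_eq_abs, abs_of_pos (by positivity)]
      field_simp
    have hu0 : u ≠ 0 := by
      intro h; rw [h] at hu1; simp at hu1
    have hgu : g v = g u := by
      rw [← hgscale (‖v‖⁻¹) (by positivity) v hv]
    have hguval : g u = Real.log ‖H u‖ := by
      simp [hg_def, hu1]
    rw [hgu, hguval]
    have := hM0 u (by simpa using hu1)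
    simpa [Real.norm_eq_abs] using this
  -- the summands
  set f : ℕ → L → ℝ := fun j v => c ^ (j + 1) * g (H^[j] v) with hf_def
  set u : ℕ → ℝ := fun j => (M * c) * c ^ j with hu_def
  have hu_sum : Summable u :=
    (summable_geometric_of_lt_one hc0.le hc1).mul_left (M * c)
  have hbound : ∀ j : ℕ, ∀ v ∈ {v : L | v ≠ 0}, ‖f j v‖ ≤ u j := by
    intro j v hv
    have hgb := hM (H^[j] v) (hiter v hv j)
    have : ‖f j v‖ = c ^ (j + 1) * |g (H^[j] v)| := by
      simp only [hf_def, Real.norm_eq_abs, abs_mul, abs_pow, abs_of_pos hc0]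
    rw [this, hu_def]
    have h1 : c ^ (j + 1) * |g (H^[j] v)| ≤ c ^ (j + 1) * M :=
      mul_le_mul_of_nonneg_left hgb (pow_pos hc0 (j + 1)).le
    calc c ^ (j + 1) * |g (H^[j] v)| ≤ c ^ (j + 1) * M := h1
      _ = M * c * c ^ j := by ring
  -- telescoping formula
  have hform : ∀ v : L, v ≠ 0 → ∀ n : ℕ,
      (1 / (k : ℝ) ^ n) * Real.log ‖H^[n] v‖
        = Real.log ‖v‖ + ∑ j ∈ Finset.range n, f j v := by
    intro v hv n
    have hcn : ∀ n : ℕ, (1 / (k : ℝ) ^ n) = c ^ n := by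
      intro n; rw [hc_def, div_pow, one_pow]
    induction n with
    | zero => simp
    | succ n ih =>
      rw [hcn] at ih ⊢
      have hw : H^[n] v ≠ 0 := hiter v hv n
      have hck : c ^ (n + 1) * (k : ℝ) = c ^ n := by
        rw [pow_succ]
        calc c ^ n * c * (k : ℝ) = c ^ n * ((k : ℝ) * c) := by ring
          _ = c ^ n := by rw [hkc, mul_one]
      have hlog : Real.log ‖H^[n + 1] v‖ = g (H^[n] v) + (k : ℝ) * Real.log ‖H^[n] v‖ := by
        rw [Function.iterate_succ_apply']
        simp only [hg_def]
        ring
      rw [hlog, Finset.sum_range_succ, ← add_assoc, ← ih]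
      simp only [hf_def]
      calc c ^ (n + 1) * (g (H^[n] v) + (k : ℝ) * Real.log ‖H^[n] v‖)
          = (c ^ (n + 1) * (k : ℝ)) * Real.log ‖H^[n] v‖ + c ^ (n + 1) * g (H^[n] v) := by ring
        _ = c ^ n * Real.log ‖H^[n] v‖ + c ^ (n + 1) * g (H^[n] v) := by rw [hck]
  -- the Green function
  refine ⟨fun v => Real.log ‖v‖ + ∑' j, f j v, ?_, ?_, ?_⟩
  · -- uniform convergence
    have htsum := tendstoUniformlyOn_tsum_nat (f := f) hu_sum hbound
    have hlogu : TendstoUniformlyOn (fun _ : ℕ => fun v : L => Real.log ‖v‖)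
        (fun v : L => Real.log ‖v‖) atTop {v : L | v ≠ 0} := by
      rw [Metric.tendstoUniformlyOn_iff]
      intro ε hε
      filter_upwards with n v hv
      simpa using hε
    have hadd := hlogu.add htsum
    refine hadd.congr ?_
    filter_upwards with n v hv
    exact (hform v hv n).symm
  · -- O(1) bound
    refine ⟨∑' j, u j, fun v hv => ?_⟩
    have h1 : |(fun v => Real.log ‖v‖ + ∑' j, f j v) v - Real.log ‖v‖| = ‖∑' j, f j v‖ := by
      simp [Real.norm_eq_abs]
    rw [h1]
    exact tsum_of_norm_bounded hu_sum.hasSum (fun j => hbound j v hv)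
  · -- functional equation
    intro v hv
    have hsum2 : Summable (fun j => c ^ j * g (H^[j] v)) := by
      apply Summable.of_norm_bounded (g := fun j => M * c ^ j)
        ((summable_geometric_of_lt_one hc0.le hc1).mul_left M)
      intro j
      have hgb := hM (H^[j] v) (hiter v hv j)
      rw [Real.norm_eq_abs, abs_mul, abs_of_pos (pow_pos hc0 j)]
      calc c ^ j * |g (H^[j] v)| ≤ c ^ j * M :=
            mul_le_mul_of_nonneg_left hgb (pow_pos hc0 j).le
        _ = M * c ^ j := by ring
    have hshift : ∀ j : ℕ, f j (H v) = c ^ (j + 1) * g (H^[j + 1] v) := by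
      intro j
      rw [hf_def]
      simp [Function.iterate_succ_apply]
    have hmul : (k : ℝ) * ∑' j, f j v = ∑' j, c ^ j * g (H^[j] v) := by
      rw [← tsum_mul_left]
      congr 1
      funext j
      rw [hf_def]
      calc (k : ℝ) * (c ^ (j + 1) * g (H^[j] v))
          = ((k : ℝ) * c) * (c ^ j * g (H^[j] v)) := by ring
        _ = c ^ j * g (H^[j] v) := by rw [hkc, one_mul]
    have hsplit : ∑' j, c ^ j * g (H^[j] v)
        = g v + ∑' j, c ^ (j + 1) * g (H^[j + 1] v) := by
      have := Summable.tsum_eq_zero_add hsum2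
      simpa using this
    have hgv : g v = Real.log ‖H v‖ - (k : ℝ) * Real.log ‖v‖ := rfl
    have htail : ∑' j, f j (H v) = ∑' j, c ^ (j + 1) * g (H^[j + 1] v) :=
      tsum_congr hshift
    simp only
    rw [mul_add, hmul, hsplit, htail, hgv]
    ring
end

section
/- Let E = E₁ ⊕ ⋯ ⊕ E_p be a finite-dimensional complex vector space with projections π_j, and let H : (E,0) → (E,0) be an analytic germ. If for each j ∈ [1,p] and all v near 0 the derivative satisfies D_vH(π_j(v)) = k_j · π_j(H(v)) (i.e., DH ∘ ϑ_j = k_j · ϑ_j ∘ H), then H = H₁ ⊕ ⋯ ⊕ H_p where each H_j : E_j → E_j is the germ of a homogeneous map of degree k_j. -/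
open Metric


lemma lemG {F : Type*} [NormedAddCommGroup F] [NormedSpace ℂ F]
    (k : ℕ) (R : ℝ) (hR : 1 < R) (g : ℂ → F)
    (hg : ∀ z ∈ ball (0:ℂ) R, DifferentiableAt ℂ g z)
    (heq : ∀ z ∈ ball (0:ℂ) R, z • deriv g z = (k:ℂ) • g z) :
    ∀ z ∈ ball (0:ℂ) R, g z = z ^ k • g 1 := by
  have hlogR : 0 < Real.log R := Real.log_pos hR
  set P : Set ℂ := {μ : ℂ | μ.re < Real.log R} with hP
  have hPconv : Convex ℝ P := convex_halfSpace_re_lt _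
  have hPmem : ∀ μ ∈ P, Complex.exp μ ∈ ball (0:ℂ) R := by
    intro μ hμ
    rw [mem_ball_zero_iff, Complex.norm_exp]
    calc Real.exp μ.re < Real.exp (Real.log R) := Real.exp_lt_exp.2 hμ
    _ = R := Real.exp_log (by linarith)
  set h : ℂ → F := fun μ => Complex.exp (-(k:ℂ) * μ) • g (Complex.exp μ) with hh
  have hderiv : ∀ μ ∈ P, HasDerivAt h 0 μ := by
    intro μ hμ
    have h1 : HasDerivAt (fun μ : ℂ => Complex.exp (-(k:ℂ) * μ))
        (Complex.exp (-(k:ℂ) * μ) * (-(k:ℂ))) μ := by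
      simpa using ((hasDerivAt_id μ).const_mul (-(k:ℂ))).cexp
    have h2 : HasDerivAt (fun μ : ℂ => g (Complex.exp μ))
        (Complex.exp μ • deriv g (Complex.exp μ)) μ :=
      ((hg _ (hPmem μ hμ)).hasDerivAt).scomp μ (Complex.hasDerivAt_exp μ)
    have h3 := h1.smul h2
    convert h3 using 1
    · rfl
    rw [heq _ (hPmem μ hμ), smul_smul, ← add_smul]
    have hc : Complex.exp (-(k:ℂ)*μ) * (k:ℂ) + Complex.exp (-(k:ℂ) * μ) * (-(k:ℂ)) = 0 := by
      ring
    rw [hc, zero_smul]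
  have hconst : ∀ μ ∈ P, h μ = h 0 := by
    intro μ hμ
    have h0 : (0:ℂ) ∈ P := by simpa [hP] using hlogR
    have hopen : IsOpen P := isOpen_lt Complex.continuous_re continuous_const
    refine hPconv.is_const_of_fderivWithin_eq_zero
      (fun x hx => ((hderiv x hx).differentiableAt).differentiableWithinAt) ?_ hμ h0
    intro x hx
    rw [fderivWithin_eq_fderiv (hopen.uniqueDiffOn x hx) (hderiv x hx).differentiableAt,
      (hderiv x hx).hasFDerivAt.fderiv]
    exact ContinuousLinearMap.ext fun y => by simp
  have key : ∀ z ∈ ball (0:ℂ) R, z ≠ 0 → g z = z ^ k • g 1 := by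
    intro z hz hz0
    have hμ : Complex.log z ∈ P := by
      have : ‖z‖ < R := by rwa [mem_ball_zero_iff] at hz
      simpa [hP, Complex.log_re] using Real.log_lt_log (norm_pos_iff.mpr hz0) this
    have hcz := hconst _ hμ
    rw [hh] at hcz
    simp only [Complex.exp_log hz0, mul_zero, Complex.exp_zero, one_smul] at hcz
    have h2 : Complex.exp (-(k:ℂ) * Complex.log z) = (z ^ k)⁻¹ := by
      rw [neg_mul, Complex.exp_neg, Complex.exp_nat_mul, Complex.exp_log hz0]
    rw [h2] at hcz
    have hzk : (z ^ k) ≠ 0 := pow_ne_zero _ hz0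
    calc g z = (z ^ k * (z ^ k)⁻¹) • g z := by rw [mul_inv_cancel₀ hzk, one_smul]
    _ = z ^ k • ((z ^ k)⁻¹ • g z) := by rw [smul_smul]
    _ = z ^ k • g 1 := by rw [hcz]
  intro z hz
  rcases eq_or_ne z 0 with rfl | hz0
  · have hcont : Filter.Tendsto g (nhdsWithin 0 {(0:ℂ)}ᶜ) (nhds (g 0)) :=
      ((hg 0 hz).continuousAt).continuousWithinAt.tendsto
    have h2 : Filter.Tendsto (fun z : ℂ => z ^ k • g 1) (nhdsWithin 0 {(0:ℂ)}ᶜ)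
        (nhds ((0:ℂ) ^ k • g 1)) :=
      ((continuous_pow k).smul continuous_const).continuousWithinAt.tendsto
    have heven : ∀ᶠ w in nhdsWithin 0 {(0:ℂ)}ᶜ, (fun z : ℂ => z ^ k • g 1) w = g w := by
      filter_upwards [self_mem_nhdsWithin,
        eventually_nhdsWithin_of_eventually_nhds (isOpen_ball.eventually_mem hz)]
        with w hw1 hw2
      exact (key w hw2 hw1).symm
    exact tendsto_nhds_unique hcont (h2.congr' heven)
  · exact key z hz hz0
lemma lemL {p : ℕ} {E : Fin p → Type*}
    [∀ j, NormedAddCommGroup (E j)] [∀ j, NormedSpace ℂ (E j)]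
    [∀ j, FiniteDimensional ℂ (E j)]
    (k : Fin p → ℕ)
    (H : (∀ j, E j) → (∀ j, E j)) (r : ℝ) (hr : 0 < r)
    (hHa : AnalyticOnNhd ℂ H (ball (0 : ∀ j, E j) r))
    (heuler : ∀ v ∈ ball (0 : ∀ j, E j) r, ∀ j,
      fderiv ℂ H v (Pi.single j (v j)) = (k j : ℂ) • Pi.single j (H v j))
    (v : ∀ j, E j) (hv : v ∈ ball (0 : ∀ j, E j) r) (i : Fin p) (hu : v i ≠ 0)
    (lam : ℂ) (hlam : ‖lam • v i‖ < r) :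
    H (Function.update v i (lam • v i)) i = lam ^ (k i) • H v i ∧
      ∀ m, m ≠ i → H (Function.update v i (lam • v i)) m = H v m := by
  classical
  set u := v i with hu'
  have hun : 0 < ‖u‖ := norm_pos_iff.2 hu
  have hvr : ‖v‖ < r := by rwa [mem_ball_zero_iff] at hv
  set R : ℝ := r / ‖u‖ with hR'
  have hR : 1 < R := (one_lt_div hun).2 (lt_of_le_of_lt (norm_le_pi_norm v i) hvr)
  set ψ : ℂ → (∀ j, E j) := fun z => Function.update v i (z • u) with hψ
  have hψmem : ∀ z ∈ ball (0:ℂ) R, ψ z ∈ ball (0 : ∀ j, E j) r := by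
    intro z hz
    rw [mem_ball_zero_iff, pi_norm_lt_iff hr]
    intro m
    by_cases hm : m = i
    · subst hm
      rw [hψ]
      simp only [Function.update_self, norm_smul]
      rw [mem_ball_zero_iff] at hz
      calc ‖z‖ * ‖u‖ < R * ‖u‖ := by
            exact mul_lt_mul_of_pos_right hz hun
      _ = r := by rw [hR']; field_simp
    · rw [hψ]
      simp only [Function.update_of_ne hm]
      exact lt_of_le_of_lt (norm_le_pi_norm v m) hvr
  have hψd : ∀ z : ℂ, HasDerivAt ψ (Pi.single i u) z := by
    intro z
    have heqψ : ψ = fun z : ℂ => Function.update v i 0 + z • Pi.single i u := by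
      funext z
      funext m
      by_cases hm : m = i
      · subst hm; simp [hψ]
      · simp [hψ, Function.update_of_ne hm, Pi.single_eq_of_ne hm]
    rw [heqψ]
    simpa using (((hasDerivAt_id z).smul_const (Pi.single i u)).const_add
      (Function.update v i 0))
  -- the composed function and its scaled components
  have hkey : ∀ m : Fin p, ∀ z ∈ ball (0:ℂ) R,
      H (ψ z) m = z ^ (if m = i then k i else 0) • H (ψ 1) m := by
    intro m
    have := lemG (F := E m) (if m = i then k i else 0) R hR (fun z => H (ψ z) m) ?_ ?_
    · intro z hz
      exact this z hz
    · intro z hz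
      have hH : DifferentiableAt ℂ H (ψ z) := (hHa _ (hψmem z hz)).differentiableAt
      exact ((ContinuousLinearMap.proj m).differentiableAt.comp _
        (hH.comp _ (hψd z).differentiableAt))
    · intro z hz
      have hH : DifferentiableAt ℂ H (ψ z) := (hHa _ (hψmem z hz)).differentiableAt
      have hcomp : HasDerivAt (fun z => H (ψ z) m)
          (fderiv ℂ H (ψ z) (Pi.single i u) m) z := by
        have h1 : HasDerivAt (fun z => H (ψ z)) (fderiv ℂ H (ψ z) (Pi.single i u)) z :=
          hH.hasFDerivAt.comp_hasDerivAt z (hψd z)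
        exact ((ContinuousLinearMap.proj m).hasFDerivAt.comp_hasDerivAt z h1)
      rw [hcomp.deriv]
      have h2 : z • fderiv ℂ H (ψ z) (Pi.single i u) m
          = fderiv ℂ H (ψ z) (Pi.single i ((ψ z) i)) m := by
        have : (ψ z) i = z • u := by rw [hψ]; simp
        rw [this, Pi.single_smul, ContinuousLinearMap.map_smul]
        rfl
      rw [h2, heuler _ (hψmem z hz) i]
      by_cases hm : m = i
      · subst hm; simp
      · simp [Pi.single_eq_of_ne hm, hm]
  have h1mem : (1:ℂ) ∈ ball (0:ℂ) R := by
    rw [mem_ball_zero_iff]; simpa using hR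
  have hlmem : lam ∈ ball (0:ℂ) R := by
    rw [mem_ball_zero_iff]
    rw [norm_smul] at hlam
    rw [hR', lt_div_iff₀ hun]
    exact hlam
  have hψ1 : ψ 1 = v := by
    rw [hψ]; simp [Function.update_eq_self, hu']
  constructor
  · have := hkey i lam hlmem
    rw [hψ1] at this
    rw [hψ] at this
    simpa using this
  · intro m hm
    have := hkey m lam hlmem
    rw [hψ1] at this
    rw [hψ] at this
    simpa [hm] using this

/-- If an analytic germ `H : (E,0) → (E,0)` on `E = E₁ ⊕ ⋯ ⊕ E_p` satisfies
`D_v H (π_j v) = k_j • π_j (H v)` for all `j` and all `v` near `0`, then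
`H = H₁ ⊕ ⋯ ⊕ H_p` near `0` with each `H_j : E_j → E_j` homogeneous of degree `k_j`. -/
theorem quasihomogeneous_of_euler {p : ℕ} {E : Fin p → Type*}
    [∀ j, NormedAddCommGroup (E j)] [∀ j, NormedSpace ℂ (E j)]
    [∀ j, FiniteDimensional ℂ (E j)]
    (k : Fin p → ℕ) (hk : ∀ j, 1 ≤ k j)
    (H : (∀ j, E j) → (∀ j, E j)) (r : ℝ) (hr : 0 < r)
    (hHa : AnalyticOnNhd ℂ H (ball (0 : ∀ j, E j) r)) (hH0 : H 0 = 0)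
    (heuler : ∀ v ∈ ball (0 : ∀ j, E j) r, ∀ j,
      fderiv ℂ H v (Pi.single j (v j)) = (k j : ℂ) • Pi.single j (H v j)) :
    ∃ r' > 0, r' ≤ r ∧ ∃ H' : ∀ j, E j → E j,
      (∀ j, ∀ (lam : ℂ) (w : E j), H' j (lam • w) = lam ^ (k j) • H' j w) ∧
      ∀ v ∈ ball (0 : ∀ j, E j) r', H v = fun j => H' j (v j) := by
  classical
  -- scaling lemma
  have hSc : ∀ j, ∀ w : E j, ‖w‖ < r → ∀ z : ℂ, ‖z • w‖ < r →
      H (Pi.single j (z • w)) j = z ^ (k j) • H (Pi.single j w) j := by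
    intro j w hw z hz
    rcases eq_or_ne w 0 with rfl | hw0
    · simp [hH0]
    · have hv : Pi.single j w ∈ ball (0 : ∀ m, E m) r := by
        rw [mem_ball_zero_iff, Pi.norm_single]; exact hw
      have hmain := (lemL k H r hr hHa heuler (Pi.single j w) hv j (by simpa using hw0)
        z (by simpa using hz)).1
      have hupd : Function.update (Pi.single j w) j (z • (Pi.single j w j))
          = Pi.single j (z • w) := by
        funext m
        by_cases hm : m = j
        · subst hm; simp
        · simp [Function.update_of_ne hm, Pi.single_eq_of_ne hm]
      rw [hupd] at hmain
      exact hmain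
  -- zeroing lemma
  have hZ : ∀ v ∈ ball (0 : ∀ j, E j) r, ∀ j, H v j = H (Pi.single j (v j)) j := by
    have hzo : ∀ s : Finset (Fin p), ∀ v ∈ ball (0 : ∀ j, E j) r, ∀ j ∉ s,
        H (fun m => if m ∈ s then 0 else v m) j = H v j := by
      intro s
      induction s using Finset.induction_on with
      | empty => intro v hv j hj; simp
      | @insert i s his ih =>
        intro v hv j hj
        have hji : j ≠ i ∧ j ∉ s := by simpa [Finset.mem_insert, not_or] using hj
        set w : ∀ m, E m := fun m => if m ∈ s then 0 else v m with hw
        have hwball : w ∈ ball (0 : ∀ j, E j) r := by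
          rw [mem_ball_zero_iff, pi_norm_lt_iff hr]
          intro m
          by_cases hm : m ∈ s
          · simp [hw, hm, hr]
          · simp only [hw, hm, if_false]
            exact lt_of_le_of_lt (norm_le_pi_norm v m) (mem_ball_zero_iff.1 hv)
        have hinsert : (fun m => if m ∈ insert i s then 0 else v m)
            = Function.update w i 0 := by
          funext m
          by_cases hm : m = i
          · subst hm; simp
          · by_cases hms : m ∈ s <;>
              simp [Function.update_of_ne hm, hw, hm, hms, Finset.mem_insert]
        rw [hinsert]
        rcases eq_or_ne (w i) 0 with h0 | h0
        · rw [← h0, Function.update_eq_self]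
          exact ih v hv j hji.2
        · have hthis := (lemL k H r hr hHa heuler w hwball i h0 0
            (by simp [hr])).2 j hji.1
          rw [zero_smul] at hthis
          rw [hthis]
          exact ih v hv j hji.2
    intro v hv j
    have hsj := hzo (Finset.univ.erase j) v hv j (by simp)
    have hsingle : (fun m => if m ∈ Finset.univ.erase j then 0 else v m)
        = Pi.single j (v j) := by
      funext m
      by_cases hm : m = j
      · subst hm; simp
      · simp [Finset.mem_erase, hm, Pi.single_eq_of_ne hm]
    rw [hsingle] at hsj
    exact hsj.symm
  -- construction of H'
  set c : ∀ j, E j → ℝ := fun _ w => r / (2 * ‖w‖) with hc'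
  have hc : ∀ j (w : E j), w ≠ 0 → 0 < c j w := by
    intro j w hw0
    have := norm_pos_iff.2 hw0
    rw [hc']
    positivity
  have hcnorm : ∀ j (w : E j), w ≠ 0 → ‖((c j w : ℝ) : ℂ) • w‖ = r / 2 := by
    intro j w hw0
    have hwn : ‖w‖ ≠ 0 := ne_of_gt (norm_pos_iff.2 hw0)
    rw [norm_smul, Complex.norm_real, Real.norm_eq_abs, abs_of_pos (hc j w hw0), hc']
    field_simp
  set H' : ∀ j, E j → E j := fun j w =>
    if w = 0 then 0
    else ((c j w : ℝ) : ℂ)⁻¹ ^ (k j) • H (Pi.single j (((c j w : ℝ) : ℂ) • w)) j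
    with hH'
  have hmatch : ∀ j (w : E j), ‖w‖ < r → H' j w = H (Pi.single j w) j := by
    intro j w hw
    rcases eq_or_ne w 0 with rfl | hw0
    · simp [hH', hH0]
    · rw [hH']
      simp only [if_neg hw0]
      rw [hSc j w hw ((c j w : ℝ) : ℂ) (by rw [hcnorm j w hw0]; linarith)]
      rw [smul_smul, ← mul_pow, inv_mul_cancel₀, one_pow, one_smul]
      exact_mod_cast ne_of_gt (hc j w hw0)
  have hhom : ∀ j, ∀ (lam : ℂ) (w : E j), H' j (lam • w) = lam ^ (k j) • H' j w := by
    intro j lam w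
    rcases eq_or_ne w 0 with rfl | hw0
    · simp [hH']
    rcases eq_or_ne lam 0 with rfl | hl0
    · simp [hH', hw0, zero_pow (Nat.one_le_iff_ne_zero.1 (hk j))]
    · have hlw0 : lam • w ≠ 0 := smul_ne_zero hl0 hw0
      rw [hH']
      simp only [if_neg hlw0, if_neg hw0]
      have ha : ((c j w : ℝ) : ℂ) ≠ 0 := by exact_mod_cast ne_of_gt (hc j w hw0)
      have hb : ((c j (lam • w) : ℝ) : ℂ) ≠ 0 := by
        exact_mod_cast ne_of_gt (hc j (lam • w) hlw0)
      have hre : ((c j (lam • w) : ℝ) : ℂ) • lam • w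
          = ((((c j (lam • w) : ℝ) : ℂ) * lam) * ((c j w : ℝ) : ℂ)⁻¹)
            • (((c j w : ℝ) : ℂ) • w) := by
        rw [smul_smul, smul_smul]
        congr 1
        field_simp
      rw [hre, hSc j (((c j w : ℝ) : ℂ) • w) (by rw [hcnorm j w hw0]; linarith)
        _ (by rw [← hre, hcnorm j (lam • w) hlw0]; linarith)]
      rw [smul_smul, smul_smul, ← mul_pow, ← mul_pow]
      congr 2
      field_simp
  refine ⟨r, hr, le_rfl, H', hhom, ?_⟩
  intro v hv
  funext j
  rw [hZ v hv j]
  exact (hmatch j (v j)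
    (lt_of_le_of_lt (norm_le_pi_norm v j) (mem_ball_zero_iff.1 hv))).symm
end

section
/- Let H = H₁ ⊕ ⋯ ⊕ H_p be quasihomogeneous on E = E₁ ⊕ ⋯ ⊕ E_p with multidegree (k₁,…,k_p), all k_j ≥ 2. Fix j and let E_j^⊤ = {v : π_j(v) = 0}. Suppose X ⊆ E is a set such that near 0, H^{-1}(X) coincides with the graph of an analytic function φ : (E_j^⊤, 0) → (E_j, 0). Then φ ≡ 0 near 0, i.e., X = H^{-1}(X) = E_j^⊤ near 0. -/
open Metric

/-- Let `H = H₁ ⊕ ⋯ ⊕ H_p` be quasihomogeneous of multidegree `(k₁,…,k_p)`, all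
`k_j ≥ 2`. If, near `0`, `H⁻¹(X)` coincides with the graph of an analytic map
`φ : (E_j^⊤, 0) → (E_j, 0)`, then `φ ≡ 0` near `0`; i.e. `H⁻¹(X) = E_j^⊤` near `0`. -/
theorem preimage_graph_is_hyperplane {p : ℕ} {E : Fin p → Type*}
    [∀ i, NormedAddCommGroup (E i)] [∀ i, NormedSpace ℂ (E i)]
    [∀ i, FiniteDimensional ℂ (E i)]
    (k : Fin p → ℕ) (hk : ∀ i, 2 ≤ k i)
    (Hj : ∀ i, E i → E i)
    (hhom : ∀ i, ∀ (lam : ℂ) (w : E i), Hj i (lam • w) = lam ^ (k i) • Hj i w)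
    (H : (∀ i, E i) → (∀ i, E i)) (hH : ∀ v, H v = fun i => Hj i (v i))
    (j : Fin p) (X : Set (∀ i, E i))
    (φ : (∀ i, E i) → E j) (r : ℝ) (hr : 0 < r)
    (hφa : AnalyticOnNhd ℂ φ (ball (0 : ∀ i, E i) r)) (hφ0 : φ 0 = 0)
    (hgraph : ∀ v ∈ ball (0 : ∀ i, E i) r,
      (H v ∈ X ↔ v j = φ (Function.update v j 0))) :
    ∃ r' > 0, r' ≤ r ∧
      (∀ v ∈ ball (0 : ∀ i, E i) r', φ (Function.update v j 0) = 0) ∧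
      ∀ v ∈ ball (0 : ∀ i, E i) r', (H v ∈ X ↔ v j = 0) := by
  -- a primitive (k j)-th root of unity
  have hkj : (k j : ℕ) ≠ 0 := by have := hk j; omega
  obtain ⟨ζ, hζprim⟩ : ∃ ζ : ℂ, IsPrimitiveRoot ζ (k j) :=
    ⟨Complex.exp (2 * Real.pi * Complex.I / (k j)), Complex.isPrimitiveRoot_exp _ hkj⟩
  have hζpow : ζ ^ (k j) = 1 := hζprim.pow_eq_one
  have hζne : ζ ≠ 1 := hζprim.ne_one (by have := hk j; omega)
  -- continuity of φ at 0 gives δ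
  have hcont : ContinuousAt φ 0 := (hφa 0 (mem_ball_self hr)).continuousAt
  obtain ⟨δ, hδpos, hδ⟩ := Metric.continuousAt_iff.mp hcont r hr
  have hmain : ∀ v ∈ ball (0 : ∀ i, E i) (min r δ), φ (Function.update v j 0) = 0 := by
    intro v hv
    set u := Function.update v j 0 with hu
    have huj : u j = 0 := Function.update_self j 0 v
    have huu : Function.update u j 0 = u := by
      rw [hu, Function.update_idem]
    have hunorm : ‖u‖ ≤ ‖v‖ := by
      apply pi_norm_le_iff_of_nonneg (norm_nonneg v) |>.mpr
      intro i
      rcases eq_or_ne i j with rfl | hij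
      · simp [huj]
      · rw [hu, Function.update_of_ne hij]; exact norm_le_pi_norm v i
    have hun : ‖u‖ < min r δ := lt_of_le_of_lt hunorm (by simpa using hv)
    have hφu : ‖φ u‖ < r := by
      have := hδ (show dist u 0 < δ by simpa using hun.trans_le (min_le_right r δ))
      simpa [hφ0] using this
    -- the graph point w and its rotated version w'
    set w := Function.update u j (φ u) with hw
    set w' := Function.update u j (ζ • φ u) with hw'
    have hζabs : ‖ζ‖ = 1 := hζprim.norm'_eq_one hkj
    have hmem : ∀ c : E j, ‖c‖ < r → Function.update u j c ∈ ball (0 : ∀ i, E i) r := by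
      intro c hc
      rw [mem_ball, dist_zero_right]
      rw [pi_norm_lt_iff hr]
      intro i
      rcases eq_or_ne i j with rfl | hij
      · simpa using hc
      · rw [Function.update_of_ne hij]
        exact (norm_le_pi_norm u i).trans_lt (hun.trans_le (min_le_left r δ))
    have hwmem : w ∈ ball (0 : ∀ i, E i) r := hmem _ hφu
    have hw'mem : w' ∈ ball (0 : ∀ i, E i) r := hmem _ (by rw [norm_smul, hζabs, one_mul]; exact hφu)
    have hHeq : H w' = H w := by
      rw [hH, hH]
      funext i
      rcases eq_or_ne i j with rfl | hij
      · simp only [hw, hw', Function.update_self]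
        rw [hhom i ζ (φ u), hζpow, one_smul]
      · simp [hw, hw', Function.update_of_ne hij]
    have hupd : Function.update w j 0 = u := by rw [hw, Function.update_idem, huu]
    have hupd' : Function.update w' j 0 = u := by rw [hw', Function.update_idem, huu]
    have hwX : H w ∈ X := by
      rw [hgraph w hwmem, hupd, hw, Function.update_self]
    have : ζ • φ u = φ u := by
      have := (hgraph w' hw'mem).mp (hHeq ▸ hwX)
      rwa [hupd', hw', Function.update_self] at this
    have hsub : (ζ - 1) • φ u = 0 := by rw [sub_smul, one_smul, this, sub_self]
    rcases smul_eq_zero.mp hsub with h | h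
    · exact absurd (sub_eq_zero.mp h) hζne
    · exact h
  refine ⟨min r δ, lt_min hr hδpos, min_le_left _ _, hmain, ?_⟩
  intro v hv
  have hvr : v ∈ ball (0 : ∀ i, E i) r :=
    ball_subset_ball (min_le_left r δ) hv
  rw [hgraph v hvr, hmain v hv]
end

section
/- Let F : (E,0) → (E,0) be an analytic germ with an adapted superattracting fixed point of multidegree (k₁,…,k_p), i.e., π_j ∘ F(v) = H_j(π_j(v)) + O(‖v‖·‖π_j(v)‖^{k_j}) with H_j : E_j → E_j nondegenerate homogeneous of degree k_j ≥ 2. Then for each j the subspace E_j^⊤ = {v : π_j(v) = 0} is locally totally invariant: there is a neighborhood V of 0 with F^{-1}(E_j^⊤) ∩ V = E_j^⊤ ∩ V. -/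
open Metric Filter Asymptotics

/-- If `F : (E,0) → (E,0)` has an adapted superattracting fixed point, i.e.
`π_j ∘ F (v) = H_j (π_j v) + O(‖v‖ · ‖π_j v‖^(k_j))` with `H_j` nondegenerate
homogeneous of degree `k_j ≥ 2`, then each hyperplane `E_j^⊤ = {v : π_j v = 0}`
is locally totally invariant: `F⁻¹(E_j^⊤) ∩ V = E_j^⊤ ∩ V` for some neighborhood
`V` of `0`. -/
theorem hyperplane_locally_totally_invariant {p : ℕ} {E : Fin p → Type*}
    [∀ i, NormedAddCommGroup (E i)] [∀ i, NormedSpace ℂ (E i)]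
    [∀ i, FiniteDimensional ℂ (E i)]
    (k : Fin p → ℕ) (hk : ∀ i, 2 ≤ k i)
    (F : (∀ i, E i) → (∀ i, E i)) (r : ℝ) (hr : 0 < r)
    (hFa : AnalyticOnNhd ℂ F (ball (0 : ∀ i, E i) r)) (hF0 : F 0 = 0)
    (Hj : ∀ i, E i → E i) (hHc : ∀ i, Continuous (Hj i))
    (hhom : ∀ i, ∀ (lam : ℂ) (w : E i), Hj i (lam • w) = lam ^ (k i) • Hj i w)
    (hnd : ∀ i, ∀ w : E i, Hj i w = 0 → w = 0)
    (hadapted : ∀ i, (fun v : ∀ i', E i' => F v i - Hj i (v i))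
      =O[nhds (0 : ∀ i', E i')] fun v => ‖v‖ * ‖v i‖ ^ (k i)) :
    ∀ j : Fin p, ∃ V ∈ nhds (0 : ∀ i, E i), ∀ v ∈ V, (F v j = 0 ↔ v j = 0) := by
  intro j
  have hkne : k j ≠ 0 := by have := hk j; omega
  have hHj0 : Hj j 0 = 0 := by
    have h := hhom j 0 0
    simpa [zero_pow hkne] using h
  -- trivial case: E j is trivial
  by_cases htriv : ∀ w : E j, w = 0
  · exact ⟨Set.univ, Filter.univ_mem, fun v _ => by simp [htriv (F v j), htriv (v j)]⟩
  push_neg at htriv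
  obtain ⟨w0, hw0⟩ := htriv
  -- lower bound on the sphere
  have hsc : IsCompact (sphere (0 : E j) 1) := isCompact_sphere 0 1
  have hsne : (sphere (0 : E j) 1).Nonempty := by
    refine ⟨(‖w0‖⁻¹ : ℂ) • w0, ?_⟩
    have h0 : ‖w0‖ ≠ 0 := norm_ne_zero_iff.2 hw0
    simp [mem_sphere_zero_iff_norm, norm_smul, inv_mul_cancel₀ h0]
  obtain ⟨u, hu, hmin⟩ := hsc.exists_isMinOn hsne
    ((hHc j).norm.continuousOn)
  set c := ‖Hj j u‖ with hcdef
  have hune : u ≠ 0 := by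
    intro h
    have : ‖u‖ = 1 := mem_sphere_zero_iff_norm.1 hu
    rw [h] at this; simp at this
  have hcpos : 0 < c := by
    rw [hcdef, norm_pos_iff]
    intro h
    exact hune (hnd j u h)
  have hlow : ∀ w : E j, c * ‖w‖ ^ (k j) ≤ ‖Hj j w‖ := by
    intro w
    rcases eq_or_ne w 0 with rfl | hw
    · simp [hHj0, zero_pow hkne]
    · have h0 : ‖w‖ ≠ 0 := norm_ne_zero_iff.2 hw
      have hmem : (‖w‖⁻¹ : ℂ) • w ∈ sphere (0 : E j) 1 := by
        simp [mem_sphere_zero_iff_norm, norm_smul, inv_mul_cancel₀ h0]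
      have hweq : w = (‖w‖ : ℂ) • ((‖w‖⁻¹ : ℂ) • w) := by
        rw [smul_smul]
        have : (‖w‖ : ℂ) * (‖w‖⁻¹ : ℂ) = 1 := by
          rw [← Complex.ofReal_inv, ← Complex.ofReal_mul, mul_inv_cancel₀ h0]
          simp
        rw [this, one_smul]
      have : ‖Hj j w‖ = ‖w‖ ^ (k j) * ‖Hj j ((‖w‖⁻¹ : ℂ) • w)‖ := by
        conv_lhs => rw [hweq]
        rw [hhom j]
        rw [norm_smul, norm_pow, Complex.norm_real, Real.norm_eq_abs,
          abs_of_nonneg (norm_nonneg w)]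
      rw [this, mul_comm]
      exact mul_le_mul_of_nonneg_left (hmin hmem) (pow_nonneg (norm_nonneg w) _)
  -- big-O bound
  obtain ⟨C, hCpos, hC⟩ := (hadapted j).exists_pos
  rw [isBigOWith_iff] at hC
  have hsmall : ∀ᶠ v in nhds (0 : ∀ i, E i), ‖v‖ < c / C := by
    filter_upwards [Metric.ball_mem_nhds (0 : ∀ i, E i) (div_pos hcpos hCpos)] with v hv
    simpa [mem_ball_zero_iff] using hv
  have hev : ∀ᶠ v in nhds (0 : ∀ i, E i),
      ‖F v j - Hj j (v j)‖ ≤ C * (‖v‖ * ‖v j‖ ^ (k j)) ∧ ‖v‖ < c / C := by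
    filter_upwards [hC, hsmall] with v h1 h2
    refine ⟨?_, h2⟩
    have hnn : (0:ℝ) ≤ ‖v‖ * ‖v j‖ ^ (k j) :=
      mul_nonneg (norm_nonneg _) (pow_nonneg (norm_nonneg _) _)
    calc ‖F v j - Hj j (v j)‖ ≤ C * ‖‖v‖ * ‖v j‖ ^ (k j)‖ := h1
      _ = C * (‖v‖ * ‖v j‖ ^ (k j)) := by rw [Real.norm_of_nonneg hnn]
  obtain ⟨V, hV, hVP⟩ := eventually_iff_exists_mem.1 hev
  refine ⟨V, hV, fun v hv => ?_⟩
  obtain ⟨hb, hs⟩ := hVP v hv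
  constructor
  · intro hFv
    by_contra hvj
    have hvjpos : 0 < ‖v j‖ ^ (k j) := pow_pos (norm_pos_iff.2 hvj) _
    have h1 : ‖Hj j (v j)‖ ≤ C * (‖v‖ * ‖v j‖ ^ (k j)) := by
      have := hb
      rw [hFv, zero_sub, norm_neg] at this
      exact this
    have h2 : C * (‖v‖ * ‖v j‖ ^ (k j)) < c * ‖v j‖ ^ (k j) := by
      have : C * ‖v‖ < c := by
        have := (lt_div_iff₀ hCpos).1 hs
        linarith [mul_comm C ‖v‖]
      calc C * (‖v‖ * ‖v j‖ ^ (k j)) = (C * ‖v‖) * ‖v j‖ ^ (k j) := by ring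
        _ < c * ‖v j‖ ^ (k j) := by
            exact mul_lt_mul_of_pos_right this hvjpos
    linarith [hlow (v j)]
  · intro hvj
    have hb' := hb
    rw [hvj] at hb'
    have h0 : F v j - Hj j 0 = 0 := by
      have : ‖F v j - Hj j 0‖ ≤ 0 := by simpa [zero_pow hkne] using hb'
      exact norm_le_zero_iff.1 this
    have heq := sub_eq_zero.1 h0
    rw [heq, hHj0]
end

section
/- Poincaré linearization: Let ξ be an analytic vector field defined near 0 in a finite-dimensional complex vector space E with ξ(v) = v + o(‖v‖) (asymptotically radial). Then ξ is linearizable: there exists an analytic germ Φ : (E,0) → (E,0) with Φ(0) = 0, D₀Φ = id, and D_vΦ(ξ(v)) = Φ(v) for all v near 0. -/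
set_option linter.unusedTactic false

open Metric Filter Asymptotics Finset
open scoped Topology ENNReal

namespace PoincareLinearization

variable {E : Type*} [NormedAddCommGroup E] [NormedSpace ℂ E]

/-- The power series of the inverse linearizing map `Ψ`, defined inductively so that
`(p.comp q) n = n • q n`. -/
noncomputable def linS (p : FormalMultilinearSeries ℂ E E) : FormalMultilinearSeries ℂ E E
  | 0 => 0
  | 1 => (continuousMultilinearCurryFin1 ℂ E E).symm (ContinuousLinearMap.id ℂ E)
  | n + 2 =>
    let q : FormalMultilinearSeries ℂ E E := fun k => if k < n + 2 then linS p k else 0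
    ((n : ℂ) + 1)⁻¹ • (p.comp q) (n + 2)

@[simp] theorem linS_zero (p : FormalMultilinearSeries ℂ E E) : linS p 0 = 0 := by rw [linS]

@[simp] theorem linS_one (p : FormalMultilinearSeries ℂ E E) :
    linS p 1 = (continuousMultilinearCurryFin1 ℂ E E).symm (ContinuousLinearMap.id ℂ E) := by
  rw [linS]

theorem linS_aux2 (p : FormalMultilinearSeries ℂ E E) (n : ℕ) (v : Fin (n + 2) → E) :
    ∑ c ∈ {c : Composition (n + 2) | 1 < c.length}.toFinset,
        p c.length (FormalMultilinearSeries.applyComposition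
          (fun k : ℕ => if k < n + 2 then linS p k else 0) c v) =
      ∑ c ∈ {c : Composition (n + 2) | 1 < c.length}.toFinset,
        p c.length ((linS p).applyComposition c v) := by
  have N : 0 < n + 2 := by norm_num
  refine Finset.sum_congr rfl fun c hc => p.congr rfl fun j hj1 hj2 => ?_
  have : ∀ k, c.blocksFun k < n + 2 := by
    simp only [Set.mem_toFinset, Set.mem_setOf_eq] at hc
    simp [← Composition.ne_single_iff N, Composition.eq_single_iff_length, ne_of_gt hc]
  simp [FormalMultilinearSeries.applyComposition, this]

theorem linS_coeff (p : FormalMultilinearSeries ℂ E E) (n : ℕ) :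
    linS p (n + 2) = ((n : ℂ) + 1)⁻¹ •
      ∑ c ∈ {c : Composition (n + 2) | 1 < c.length}.toFinset,
        p.compAlongComposition (linS p) c := by
  rw [linS]
  congr 1
  ext v
  have N : 0 < n + 2 := by norm_num
  erw [FormalMultilinearSeries.comp_rightInv_aux1 N]
  simp only [lt_irrefl, if_neg, if_false, ContinuousMultilinearMap.zero_apply]
  rw [linS_aux2]
  have : (p 1 fun _ => (0 : E)) = 0 := ContinuousMultilinearMap.map_zero _
  simp [this, ContinuousMultilinearMap.sum_apply,
    FormalMultilinearSeries.compAlongComposition_apply]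



theorem linS_norm_le (p : FormalMultilinearSeries ℂ E E) (n : ℕ) :
    ‖linS p (n + 2)‖ ≤
      ∑ c ∈ {c : Composition (n + 2) | 1 < c.length}.toFinset,
        ‖p c.length‖ * ∏ j, ‖linS p (c.blocksFun j)‖ := by
  rw [linS_coeff]
  refine (norm_smul_le (((n : ℂ) + 1)⁻¹)
    (∑ c ∈ {c : Composition (n + 2) | 1 < c.length}.toFinset,
        p.compAlongComposition (linS p) c)).trans ?_
  have h1 : ‖((n : ℂ) + 1)⁻¹‖ ≤ 1 := by
    rw [norm_inv]
    apply inv_le_one_of_one_le₀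
    rw [show ((n : ℂ) + 1) = ((n + 1 : ℕ) : ℂ) by push_cast; ring]
    rw [Complex.norm_natCast]
    exact_mod_cast Nat.succ_le_succ (Nat.zero_le n)
  calc ‖((n : ℂ) + 1)⁻¹‖ * ‖∑ c ∈ {c : Composition (n + 2) | 1 < c.length}.toFinset,
          p.compAlongComposition (linS p) c‖
      ≤ 1 * ‖∑ c ∈ {c : Composition (n + 2) | 1 < c.length}.toFinset,
          p.compAlongComposition (linS p) c‖ := by gcongr
    _ = ‖∑ c ∈ {c : Composition (n + 2) | 1 < c.length}.toFinset,
          p.compAlongComposition (linS p) c‖ := one_mul _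
    _ ≤ ∑ c ∈ {c : Composition (n + 2) | 1 < c.length}.toFinset,
          ‖p.compAlongComposition (linS p) c‖ := norm_sum_le _ _
    _ ≤ ∑ c ∈ {c : Composition (n + 2) | 1 < c.length}.toFinset,
          ‖p c.length‖ * ∏ j, ‖linS p (c.blocksFun j)‖ := by
        gcongr with c hc
        exact FormalMultilinearSeries.compAlongComposition_norm _ _ _

theorem comp_linS (p : FormalMultilinearSeries ℂ E E) (hp0 : p 0 = 0)
    (hp1 : p 1 = (continuousMultilinearCurryFin1 ℂ E E).symm (ContinuousLinearMap.id ℂ E))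
    (n : ℕ) :
    (p.comp (linS p)) n = (n : ℂ) • linS p n := by
  match n with
  | 0 =>
    ext v
    simp [FormalMultilinearSeries.comp_coeff_zero', hp0]
  | 1 =>
    ext v
    simp [FormalMultilinearSeries.comp_coeff_one, hp1]
  | n + 2 =>
    ext v
    have N : 0 < n + 2 := by norm_num
    rw [FormalMultilinearSeries.comp_rightInv_aux1 N]
    have e1 : (p 1 fun _ => linS p (n + 2) v) = linS p (n + 2) v := by
      simp [hp1]
    have e2 : ∑ c ∈ {c : Composition (n + 2) | 1 < c.length}.toFinset,
        p c.length ((linS p).applyComposition c v) = ((n : ℂ) + 1) • linS p (n + 2) v := by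
      have h := linS_coeff p n
      have hne : ((n : ℂ) + 1) ≠ 0 := by
        exact_mod_cast Nat.cast_add_one_ne_zero (R := ℂ) n
      have : ((n : ℂ) + 1) • linS p (n + 2) =
          ∑ c ∈ {c : Composition (n + 2) | 1 < c.length}.toFinset,
            p.compAlongComposition (linS p) c := by
        rw [h, smul_inv_smul₀ hne]
      rw [← ContinuousMultilinearMap.smul_apply, this]
      simp [ContinuousMultilinearMap.sum_apply,
        FormalMultilinearSeries.compAlongComposition_apply]
    rw [e1, e2, ContinuousMultilinearMap.smul_apply]
    push_cast
    module


theorem linS_bound_aux {n : ℕ} (hn : 2 ≤ n + 1) (p : FormalMultilinearSeries ℂ E E)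
    {r a C : ℝ} (hr : 0 ≤ r) (ha : 0 ≤ a) (hC : 0 ≤ C) (hp : ∀ k, ‖p k‖ ≤ C * r ^ k) :
    ∑ k ∈ Ico 1 (n + 1), a ^ k * ‖linS p k‖ ≤
      a + C * ∑ k ∈ Ico 2 (n + 1), (r * ∑ j ∈ Ico 1 n, a ^ j * ‖linS p j‖) ^ k := by
  calc
    ∑ k ∈ Ico 1 (n + 1), a ^ k * ‖linS p k‖ =
        a ^ 1 * ‖linS p 1‖ + ∑ k ∈ Ico 2 (n + 1), a ^ k * ‖linS p k‖ := by
      rw [← sum_Ico_consecutive _ one_le_two hn,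
        show Ico (1 : ℕ) 2 = {1} from Nat.Ico_succ_singleton 1, sum_singleton]
    _ ≤ a + ∑ k ∈ Ico 2 (n + 1), a ^ k *
          ∑ c ∈ ({c | 1 < Composition.length c}.toFinset : Finset (Composition k)),
            ‖p c.length‖ * ∏ j, ‖linS p (c.blocksFun j)‖ := by
      have hQ1 : a ^ 1 * ‖linS p 1‖ ≤ a := by
        rw [pow_one, linS_one, LinearIsometryEquiv.norm_map]
        calc a * ‖ContinuousLinearMap.id ℂ E‖ ≤ a * 1 := by
              gcongr
              exact ContinuousLinearMap.norm_id_le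
          _ = a := mul_one a
      refine add_le_add hQ1 (Finset.sum_le_sum fun k hk => ?_)
      have h2k : 2 ≤ k := (mem_Ico.1 hk).1
      obtain ⟨m, rfl⟩ : ∃ m, k = m + 2 := ⟨k - 2, by omega⟩
      exact mul_le_mul_of_nonneg_left (linS_norm_le p m) (by positivity)
    _ ≤ a + C * ∑ k ∈ Ico 2 (n + 1), a ^ k *
          ∑ c ∈ ({c | 1 < Composition.length c}.toFinset : Finset (Composition k)),
            r ^ c.length * ∏ j, ‖linS p (c.blocksFun j)‖ := by
      refine add_le_add le_rfl ?_
      rw [Finset.mul_sum]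
      refine sum_le_sum fun k hk => ?_
      have hkey : ∑ c ∈ ({c | 1 < Composition.length c}.toFinset : Finset (Composition k)),
            ‖p c.length‖ * ∏ j, ‖linS p (c.blocksFun j)‖ ≤
          C * ∑ c ∈ ({c | 1 < Composition.length c}.toFinset : Finset (Composition k)),
            r ^ c.length * ∏ j, ‖linS p (c.blocksFun j)‖ := by
        rw [Finset.mul_sum]
        refine sum_le_sum fun c hc => ?_
        rw [← mul_assoc]
        exact mul_le_mul_of_nonneg_right (hp _) (prod_nonneg fun j _ => norm_nonneg _)
      calc a ^ k * ∑ c ∈ ({c | 1 < Composition.length c}.toFinset : Finset (Composition k)),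
            ‖p c.length‖ * ∏ j, ‖linS p (c.blocksFun j)‖
          ≤ a ^ k * (C * ∑ c ∈ ({c | 1 < Composition.length c}.toFinset :
              Finset (Composition k)), r ^ c.length * ∏ j, ‖linS p (c.blocksFun j)‖) :=
            mul_le_mul_of_nonneg_left hkey (by positivity)
        _ = C * (a ^ k * ∑ c ∈ ({c | 1 < Composition.length c}.toFinset :
              Finset (Composition k)), r ^ c.length * ∏ j, ‖linS p (c.blocksFun j)‖) := by ring
    _ ≤ a + C * ∑ k ∈ Ico 2 (n + 1), (r * ∑ j ∈ Ico 1 n, a ^ j * ‖linS p j‖) ^ k := by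
      gcongr _ + C * ?_
      simp_rw [mul_pow]
      exact FormalMultilinearSeries.radius_right_inv_pos_of_radius_pos_aux1 n
        (fun k => ‖linS p k‖) (fun k => norm_nonneg _) hr ha

theorem linS_radius_pos (p : FormalMultilinearSeries ℂ E E) (hp : 0 < p.radius) :
    0 < (linS p).radius := by
  obtain ⟨C, r, Cpos, rpos, ple⟩ :
    ∃ (C r : _) (_ : 0 < C) (_ : 0 < r), ∀ n : ℕ, ‖p n‖ ≤ C * r ^ n :=
    p.le_mul_pow_of_radius_pos hp
  obtain ⟨a, apos, ha1, ha2⟩ :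
    ∃ (a : _) (apos : 0 < a), 2 * C * r ^ 2 * 2 ^ 2 * a ≤ 1 ∧ r * 2 * a ≤ 1 / 2 := by
    have A : ∀ᶠ a in 𝓝 (0:ℝ), 2 * C * r ^ 2 * 2 ^ 2 * a < 1 := by
      have : Tendsto (fun a : ℝ => 2 * C * r ^ 2 * 2 ^ 2 * a) (𝓝 0)
          (𝓝 (2 * C * r ^ 2 * 2 ^ 2 * 0)) := tendsto_const_nhds.mul tendsto_id
      apply (tendsto_order.1 this).2; simp [zero_lt_one]
    have B : ∀ᶠ a in 𝓝 (0:ℝ), r * 2 * a < 1 / 2 := by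
      have : Tendsto (fun a : ℝ => r * 2 * a) (𝓝 0) (𝓝 (r * 2 * 0)) :=
        tendsto_const_nhds.mul tendsto_id
      apply (tendsto_order.1 this).2; simp [zero_lt_one]
    have C' : ∀ᶠ a in 𝓝[>] (0 : ℝ), (0 : ℝ) < a := by
      filter_upwards [self_mem_nhdsWithin] with _ ha using ha
    rcases (C'.and ((A.and B).filter_mono inf_le_left)).exists with ⟨a, ha⟩
    exact ⟨a, ha.1, ha.2.1.le, ha.2.2.le⟩
  let S := fun n => ∑ k ∈ Ico 1 n, a ^ k * ‖linS p k‖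
  have IRec : ∀ n, 1 ≤ n → S n ≤ 2 * a := by
    apply Nat.le_induction
    · simp only [S]
      rw [Ico_eq_empty_of_le (le_refl 1), sum_empty]
      positivity
    · intro n one_le_n hn
      have In : 2 ≤ n + 1 := by omega
      have rSn : r * S n ≤ 1 / 2 :=
        calc
          r * S n ≤ r * (2 * a) := by gcongr
          _ = r * 2 * a := by ring
          _ ≤ 1 / 2 := ha2
      have rSn' : r * S n ≤ 1 / 2 := rSn
      calc
        S (n + 1) ≤ a + C * ∑ k ∈ Ico 2 (n + 1), (r * S n) ^ k :=
          linS_bound_aux In p rpos.le apos.le Cpos.le ple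
        _ = a + C * (((r * S n) ^ 2 - (r * S n) ^ (n + 1)) / (1 - r * S n)) := by
          rw [geom_sum_Ico' _ In]; exact ne_of_lt (rSn.trans_lt (by norm_num))
        _ ≤ a + C * ((r * S n) ^ 2 / (1 / 2)) := by
          gcongr
          · simp only [sub_le_self_iff]
            positivity
          · linarith only [rSn]
        _ = a + 2 * C * (r * S n) ^ 2 := by ring
        _ ≤ a + 2 * C * (r * (2 * a)) ^ 2 := by
          gcongr
        _ = (1 + 2 * C * r ^ 2 * 2 ^ 2 * a) * a := by ring
        _ ≤ (1 + 1) * a := by gcongr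
        _ = 2 * a := by ring
  let a' : NNReal := ⟨a, apos.le⟩
  suffices H : (a' : ENNReal) ≤ (linS p).radius by
    apply lt_of_lt_of_le _ H
    simpa only [ENNReal.coe_pos]
  apply FormalMultilinearSeries.le_radius_of_eventually_le _ (2 * a)
  filter_upwards [Ici_mem_atTop 1] with n (hn : 1 ≤ n)
  calc
    ‖linS p n‖ * (a' : ℝ) ^ n = a ^ n * ‖linS p n‖ := mul_comm _ _
    _ ≤ ∑ k ∈ Ico 1 (n + 1), a ^ k * ‖linS p k‖ :=
      (haveI : ∀ k ∈ Ico 1 (n + 1), 0 ≤ a ^ k * ‖linS p k‖ := fun k _ => by positivity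
      single_le_sum this (by simp [hn]))
    _ ≤ 2 * a := IRec (n + 1) (by norm_num)


theorem eventually_eq_id_of_hasFPowerSeriesAt {f : E → E}
    (h : HasFPowerSeriesAt f (FormalMultilinearSeries.id ℂ E 0) 0) :
    ∀ᶠ y in 𝓝 (0 : E), f y = y := by
  obtain ⟨R, hR⟩ := h
  filter_upwards [EMetric.ball_mem_nhds (0 : E) hR.r_pos] with y hy
  have h1 := hR.hasSum hy
  rw [zero_add] at h1
  have h2 : HasSum (fun n : ℕ => (FormalMultilinearSeries.id ℂ E 0) n (fun _ => y)) y := by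
    have h3 := hasSum_single (f := fun n : ℕ => (FormalMultilinearSeries.id ℂ E 0) n
        (fun _ => y)) 1 (fun b hb => ?_)
    · simpa using h3
    · match b, hb with
      | 0, _ => simp
      | (n+2), _ =>
        have hz : FormalMultilinearSeries.id ℂ E 0 (n+2) = 0 :=
          FormalMultilinearSeries.id_apply_of_one_lt _ _ _ (by omega)
        show FormalMultilinearSeries.id ℂ E 0 (n+2) (fun _ => y) = 0
        rw [hz]
        rfl
  exact h1.unique h2

theorem poincare_main {E : Type*} [NormedAddCommGroup E] [NormedSpace ℂ E]
    [CompleteSpace E] (ξ : E → E) (r : ℝ) (hr : 0 < r)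
    (hξa : AnalyticOnNhd ℂ ξ (Metric.ball (0 : E) r))
    (hrad : (fun v => ξ v - v) =o[nhds (0 : E)] fun v => ‖v‖) :
    ∃ r' > 0, r' ≤ r ∧ ∃ Φ : E → E,
      AnalyticOnNhd ℂ Φ (Metric.ball (0 : E) r') ∧ Φ 0 = 0 ∧
      fderiv ℂ Φ 0 = ContinuousLinearMap.id ℂ E ∧
      ∀ v ∈ Metric.ball (0 : E) r', fderiv ℂ Φ v (ξ v) = Φ v := by
  classical
  obtain ⟨p, hpAt⟩ : AnalyticAt ℂ ξ 0 := hξa 0 (mem_ball_self hr)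
  have hcont : ContinuousAt ξ 0 := hpAt.continuousAt
  have hξ0 : ξ 0 = 0 := by
    have t1 : Tendsto (fun v => ξ v - v) (𝓝 (0:E)) (𝓝 0) :=
      hrad.isBigO.trans_tendsto tendsto_norm_zero
    have t2 : Tendsto (fun v => ξ v - v) (𝓝 (0:E)) (𝓝 (ξ 0 - 0)) :=
      hcont.sub tendsto_id
    have := tendsto_nhds_unique t2 t1
    simpa using this
  have hDer : HasFDerivAt ξ (ContinuousLinearMap.id ℂ E) 0 := by
    have heq : (fun h : E => ξ (0 + h) - ξ 0 - (ContinuousLinearMap.id ℂ E) h)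
        = fun h => ξ h - h := by
      funext h; simp [hξ0]
    rw [hasFDerivAt_iff_isLittleO_nhds_zero, heq]
    exact hrad.of_norm_right
  have hp1 : p 1 = (continuousMultilinearCurryFin1 ℂ E E).symm (ContinuousLinearMap.id ℂ E) := by
    have h1 := hpAt.hasFDerivAt
    have h2 : continuousMultilinearCurryFin1 ℂ E E (p 1) = ContinuousLinearMap.id ℂ E :=
      h1.unique hDer
    rw [← h2]
    simp
  have hp0 : p 0 = 0 := by
    ext v
    rw [hpAt.coeff_zero v, hξ0]
    rfl
  have hpr : 0 < p.radius := by
    obtain ⟨R, hR⟩ := hpAt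
    exact hR.r_pos.trans_le hR.r_le
  set q := linS p with hqdef
  have hqr : 0 < q.radius := linS_radius_pos p hpr
  set Ψ := q.sum with hΨdef
  have hΨ : HasFPowerSeriesOnBall Ψ q 0 q.radius := q.hasFPowerSeriesOnBall hqr
  have hΨAt : HasFPowerSeriesAt Ψ q 0 := hΨ.hasFPowerSeriesAt
  have hΨ0 : Ψ 0 = 0 := by
    have h := hΨAt.coeff_zero (fun _ => 0)
    rw [← h, hqdef, linS_zero]
    rfl
  set i : E ≃L[ℂ] E := ContinuousLinearEquiv.refl ℂ E with hidef
  have hq1 : q 1 = (continuousMultilinearCurryFin1 ℂ E E).symm (i : E →L[ℂ] E) := by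
    rw [hqdef, linS_one, hidef]
    rfl
  set rq := q.rightInv i 0 with hrqdef
  have hrqr : 0 < rq.radius := FormalMultilinearSeries.radius_rightInv_pos_of_radius_pos hqr
  set Φ := rq.sum with hΦdef
  have hΦ : HasFPowerSeriesOnBall Φ rq 0 rq.radius := rq.hasFPowerSeriesOnBall hrqr
  have hΦAt : HasFPowerSeriesAt Φ rq 0 := hΦ.hasFPowerSeriesAt
  have hΦ0 : Φ 0 = 0 := by
    have h := hΦAt.coeff_zero (fun _ => 0)
    rw [← h, hrqdef, FormalMultilinearSeries.rightInv_coeff_zero]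
    rfl
  have hΦd0 : fderiv ℂ Φ 0 = ContinuousLinearMap.id ℂ E := by
    rw [hΦAt.fderiv_eq, hrqdef, FormalMultilinearSeries.rightInv_coeff_one]
    simp [hidef]
  -- Ψ ∘ Φ = id near 0
  have hcompPsiPhi : HasFPowerSeriesAt (Ψ ∘ Φ) (q.comp rq) 0 := by
    have hg : HasFPowerSeriesAt Ψ q (Φ 0) := by rw [hΦ0]; exact hΨAt
    exact hg.comp hΦAt
  have hqcomp : q.comp rq = FormalMultilinearSeries.id ℂ E 0 := by
    rw [hrqdef, FormalMultilinearSeries.comp_rightInv q i 0 hq1]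
    congr 1
    rw [hqdef, linS_zero]
    rfl
  have hid : ∀ᶠ y in 𝓝 (0:E), Ψ (Φ y) = y := by
    rw [hqcomp] at hcompPsiPhi
    exact eventually_eq_id_of_hasFPowerSeriesAt hcompPsiPhi
  -- key coefficient identity and the ODE for Ψ
  have hkey : ∀ n : ℕ, (p.comp q) n = (n : ℂ) • q n := comp_linS p hp0 hp1
  have hXiPsiAt : HasFPowerSeriesAt (ξ ∘ Ψ) (p.comp q) 0 := by
    have hg : HasFPowerSeriesAt ξ p (Ψ 0) := by rw [hΨ0]; exact hpAt
    exact hg.comp hΨAt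
  obtain ⟨R1, hR1⟩ := hXiPsiAt
  have hR1pos : 0 < min R1 q.radius := lt_min hR1.r_pos hqr
  have hODE : ∀ w ∈ EMetric.ball (0:E) (min R1 q.radius), fderiv ℂ Ψ w w = ξ (Ψ w) := by
    intro w hw
    have hw1 : w ∈ EMetric.ball (0:E) R1 := EMetric.ball_subset_ball (min_le_left _ _) hw
    have hw2 : w ∈ EMetric.ball (0:E) q.radius := EMetric.ball_subset_ball (min_le_right _ _) hw
    have h1 : HasSum (fun n => (p.comp q) n (fun _ => w)) (ξ (Ψ w)) := by
      have := hR1.hasSum hw1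
      simpa using this
    have h1' : HasSum (fun n : ℕ => n • q n (fun _ => w)) (ξ (Ψ w)) := by
      convert h1 using 1
      funext n
      rw [hkey n, ContinuousMultilinearMap.smul_apply, Nat.cast_smul_eq_nsmul]
    have h2 : HasSum (fun n : ℕ => (n+1) • q (n+1) (fun _ => w)) (ξ (Ψ w)) := by
      have h3 := (hasSum_nat_add_iff' (f := fun n : ℕ => n • q n (fun _ => w)) 1).2 h1'
      simpa using h3
    have h4 : HasSum (fun n => q.derivSeries n (fun _ => w)) (fderiv ℂ Ψ w) := by
      have := hΨ.fderiv.hasSum hw2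
      simpa using this
    have h5 : HasSum (fun n => q.derivSeries n (fun _ => w) w) (fderiv ℂ Ψ w w) :=
      h4.mapL (ContinuousLinearMap.apply ℂ E w)
    have h6 : HasSum (fun n : ℕ => (n+1) • q (n+1) (fun _ => w)) (fderiv ℂ Ψ w w) := by
      convert h5 using 1
      funext n
      rw [q.derivSeries_apply_diag]
    exact h6.unique h2
  -- neighborhood of good `w`
  have hdΨ0 : fderiv ℂ Ψ 0 = ContinuousLinearMap.id ℂ E := by
    rw [hΨAt.fderiv_eq, hq1]
    simp [hidef]
  have hWev : ∀ᶠ w in 𝓝 (0:E), ‖fderiv ℂ Ψ w - ContinuousLinearMap.id ℂ E‖ < 1 := by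
    have hc : ContinuousAt (fderiv ℂ Ψ) 0 :=
      hΨ.fderiv.continuousOn.continuousAt (EMetric.ball_mem_nhds 0 hqr)
    have ht : Tendsto (fderiv ℂ Ψ) (𝓝 0) (𝓝 (ContinuousLinearMap.id ℂ E)) := by
      rw [← hdΨ0]; exact hc
    filter_upwards [ht (Metric.ball_mem_nhds (ContinuousLinearMap.id ℂ E) one_pos)] with w hw
    rwa [Set.mem_preimage, Metric.mem_ball, dist_eq_norm] at hw
  have hWset : ∀ᶠ w in 𝓝 (0:E), (fderiv ℂ Ψ w w = ξ (Ψ w)) ∧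
      ‖fderiv ℂ Ψ w - ContinuousLinearMap.id ℂ E‖ < 1 ∧
      w ∈ EMetric.ball (0:E) q.radius := by
    filter_upwards [hWev, EMetric.ball_mem_nhds (0:E) hR1pos,
      EMetric.ball_mem_nhds (0:E) hqr] with w h1 h2 h3
    exact ⟨hODE w h2, h1, h3⟩
  obtain ⟨δ, δpos, hδ⟩ := Metric.eventually_nhds_iff_ball.1 hWset
  have hΦδ : ∀ᶠ v in 𝓝 (0:E), Φ v ∈ Metric.ball (0:E) δ := by
    have ht : Tendsto Φ (𝓝 0) (𝓝 (0:E)) := by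
      have := hΦAt.continuousAt
      rwa [ContinuousAt, hΦ0] at this
    exact ht (Metric.ball_mem_nhds _ δpos)
  have hN : ∀ᶠ v in 𝓝 (0:E), (v ∈ EMetric.ball (0:E) rq.radius) ∧ Ψ (Φ v) = v ∧
      Φ v ∈ Metric.ball (0:E) δ := by
    filter_upwards [EMetric.ball_mem_nhds (0:E) hrqr, hid, hΦδ] with v h1 h2 h3
    exact ⟨h1, h2, h3⟩
  obtain ⟨ε, εpos, hε⟩ := Metric.eventually_nhds_iff_ball.1 hN
  refine ⟨min ε r, lt_min εpos hr, min_le_right _ _, Φ, ?_, hΦ0, hΦd0, ?_⟩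
  · intro v hv
    have hvε : v ∈ Metric.ball (0:E) ε :=
      Metric.ball_subset_ball (min_le_left _ _) hv
    exact hΦ.analyticOnNhd v (hε v hvε).1
  · intro v hv
    have hvε : v ∈ Metric.ball (0:E) ε :=
      Metric.ball_subset_ball (min_le_left _ _) hv
    obtain ⟨hv1, hv2, hv3⟩ := hε v hvε
    obtain ⟨hw1, hw2, hw3⟩ := hδ (Φ v) hv3
    have hΦan : AnalyticAt ℂ Φ v := hΦ.analyticOnNhd v hv1
    have hΨan : AnalyticAt ℂ Ψ (Φ v) := hΨ.analyticOnNhd (Φ v) hw3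
    have hdΦ : DifferentiableAt ℂ Φ v := hΦan.differentiableAt
    have hdΨ : DifferentiableAt ℂ Ψ (Φ v) := hΨan.differentiableAt
    have hidv : (Ψ ∘ Φ) =ᶠ[𝓝 v] _root_.id := by
      filter_upwards [isOpen_ball.mem_nhds hvε] with y hy
      exact (hε y hy).2.1
    have h5 : fderiv ℂ (Ψ ∘ Φ) v = ContinuousLinearMap.id ℂ E := by
      rw [hidv.fderiv_eq]
      exact fderiv_id
    have h6 : (fderiv ℂ Ψ (Φ v)).comp (fderiv ℂ Φ v) = ContinuousLinearMap.id ℂ E := by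
      rw [← fderiv_comp v hdΨ hdΦ]
      exact h5
    set A := fderiv ℂ Ψ (Φ v) with hA
    have hAnorm : ‖(1 : E →L[ℂ] E) - A‖ < 1 := by
      rw [norm_sub_rev]
      exact hw2
    let u : (E →L[ℂ] E)ˣ := Units.oneSub _ hAnorm
    have hu : (u : E →L[ℂ] E) = A := by
      show (1 : E →L[ℂ] E) - ((1 : E →L[ℂ] E) - A) = A
      exact sub_sub_cancel _ _
    have h7 : ∀ y : E, ((u⁻¹ : (E →L[ℂ] E)ˣ) : E →L[ℂ] E) (A y) = y := by
      intro y
      rw [← hu, ← ContinuousLinearMap.mul_apply, u.inv_mul]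
      rfl
    have hinj : ∀ z z' : E, A z = A z' → z = z' := by
      intro z z' hzz
      calc z = ((u⁻¹ : (E →L[ℂ] E)ˣ) : E →L[ℂ] E) (A z) := (h7 z).symm
        _ = ((u⁻¹ : (E →L[ℂ] E)ˣ) : E →L[ℂ] E) (A z') := by rw [hzz]
        _ = z' := h7 z'
    apply hinj
    have e1 : A (fderiv ℂ Φ v (ξ v)) = ξ v := by
      rw [← ContinuousLinearMap.comp_apply, h6]
      rfl
    have e2 : A (Φ v) = ξ v := by
      rw [hw1, hv2]
    rw [e1, e2]

end PoincareLinearization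


open Metric Filter Asymptotics

/-- **Poincaré linearization.** An analytic vector field `ξ` near `0` in a
finite-dimensional complex vector space with `ξ v = v + o(‖v‖)` is linearizable:
there is an analytic germ `Φ` with `Φ 0 = 0`, `D₀Φ = id`, and `D_vΦ (ξ v) = Φ v`. -/
theorem poincare_linearization {E : Type*} [NormedAddCommGroup E] [NormedSpace ℂ E]
    [FiniteDimensional ℂ E] (ξ : E → E) (r : ℝ) (hr : 0 < r)
    (hξa : AnalyticOnNhd ℂ ξ (ball (0 : E) r))
    (hrad : (fun v => ξ v - v) =o[nhds (0 : E)] fun v => ‖v‖) :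
    ∃ r' > 0, r' ≤ r ∧ ∃ Φ : E → E,
      AnalyticOnNhd ℂ Φ (ball (0 : E) r') ∧ Φ 0 = 0 ∧
      fderiv ℂ Φ 0 = ContinuousLinearMap.id ℂ E ∧
      ∀ v ∈ ball (0 : E) r', fderiv ℂ Φ v (ξ v) = Φ v :=
  PoincareLinearization.poincare_main ξ r hr hξa hrad
end

section
/- With the notation above (I finite of cardinality m ≥ 2, E the functions I → ℂ with average 0, H(x) = P_x ∘ x), one has H^{-1}(0) = {0}: if P_x(x_i) = 0 for all i ∈ I, then x = 0. -/
open Finset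

/-- `Qpoly m x = ∏ i (X - x i)`, the monic polynomial with roots `x i`. -/
noncomputable def Qpoly (m : ℕ) (x : Fin m → ℂ) : Polynomial ℂ :=
  ∏ i, (Polynomial.X - Polynomial.C (x i))

/-- The antiderivative of `w ↦ ∏ i (w - x i)` vanishing at `0`. -/
noncomputable def Aanti (m : ℕ) (x : Fin m → ℂ) (t : ℂ) : ℂ :=
  ∑ n ∈ Finset.range (m + 1), (Qpoly m x).coeff n * t ^ (n + 1) / ((n : ℂ) + 1)

/-- `Ppoly m x t = ((m+1)/m) ∑_j ∫_{x_j}^t ∏_i (w - x_i) dw`, the monic centered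
polynomial of degree `m+1` with critical points `x i` and centered critical values. -/
noncomputable def Ppoly (m : ℕ) (x : Fin m → ℂ) (t : ℂ) : ℂ :=
  (((m : ℂ) + 1) / m) * ∑ j, (Aanti m x t - Aanti m x (x j))

/-- `Hmap m x = P_x ∘ x`. -/
noncomputable def Hmap (m : ℕ) (x : Fin m → ℂ) : Fin m → ℂ :=
  fun i => Ppoly m x (x i)


section Aux
open Polynomial

noncomputable def Apoly (m : ℕ) (x : Fin m → ℂ) : Polynomial ℂ :=
  ∑ n ∈ Finset.range (m + 1), C ((Qpoly m x).coeff n / ((n : ℂ) + 1)) * X ^ (n + 1)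

noncomputable def Ppol (m : ℕ) (x : Fin m → ℂ) : Polynomial ℂ :=
  C (((m : ℂ) + 1) / m) * ∑ j : Fin m, (Apoly m x - C (Aanti m x (x j)))

lemma Qpoly_monic (m : ℕ) (x : Fin m → ℂ) : (Qpoly m x).Monic :=
  monic_prod_of_monic _ _ fun i _ => monic_X_sub_C (x i)

lemma Qpoly_natDegree (m : ℕ) (x : Fin m → ℂ) : (Qpoly m x).natDegree = m := by
  rw [Qpoly, natDegree_prod_of_monic _ _ fun i _ => monic_X_sub_C (x i)]
  simp

lemma Qpoly_roots (m : ℕ) (x : Fin m → ℂ) :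
    (Qpoly m x).roots = Multiset.map x Finset.univ.val := by
  have : Qpoly m x = ((Multiset.map x Finset.univ.val).map fun a => X - C a).prod := by
    rw [Qpoly, Finset.prod, Multiset.map_map]; rfl
  rw [this, roots_multiset_prod_X_sub_C]

lemma Apoly_eval (m : ℕ) (x : Fin m → ℂ) (t : ℂ) : (Apoly m x).eval t = Aanti m x t := by
  rw [Apoly, Aanti, eval_finset_sum]
  refine Finset.sum_congr rfl fun n _ => ?_
  simp [div_mul_eq_mul_div]

lemma Apoly_deriv (m : ℕ) (x : Fin m → ℂ) : derivative (Apoly m x) = Qpoly m x := by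
  rw [Apoly, derivative_sum]
  have : ∀ n ∈ Finset.range (m + 1),
      derivative (C ((Qpoly m x).coeff n / ((n : ℂ) + 1)) * X ^ (n + 1))
      = C ((Qpoly m x).coeff n) * X ^ n := by
    intro n _
    rw [derivative_C_mul, derivative_X_pow]
    have hne : ((n : ℂ) + 1) ≠ 0 := by
      exact_mod_cast (Nat.cast_add_one_ne_zero n : ((n : ℂ)+1) ≠ 0)
    push_cast
    rw [← mul_assoc, ← C_mul, div_mul_cancel₀ _ hne]
  rw [Finset.sum_congr rfl this]
  conv_rhs => rw [(Qpoly m x).as_sum_range' (m + 1) (by rw [Qpoly_natDegree]; omega)]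
  refine Finset.sum_congr rfl fun n _ => ?_
  rw [C_mul_X_pow_eq_monomial]

lemma Ppol_eval (m : ℕ) (x : Fin m → ℂ) (t : ℂ) : (Ppol m x).eval t = Ppoly m x t := by
  simp [Ppol, Ppoly, eval_finset_sum, Apoly_eval]

lemma Ppol_deriv (m : ℕ) (hm : 2 ≤ m) (x : Fin m → ℂ) :
    derivative (Ppol m x) = C ((m : ℂ) + 1) * Qpoly m x := by
  have hmne : (m : ℂ) ≠ 0 := by
    exact_mod_cast Nat.cast_ne_zero.2 (by omega)
  rw [Ppol, derivative_C_mul, derivative_sum]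
  simp only [derivative_sub, derivative_C, sub_zero, Apoly_deriv]
  rw [Finset.sum_const, card_univ, Fintype.card_fin, nsmul_eq_mul, ← mul_assoc,
    ← C_eq_natCast, ← C_mul, div_mul_cancel₀ _ hmne]

end Aux

open Polynomial

/-- `H⁻¹(0) = {0}`: if all critical values of `P_x` vanish then `x = 0`. -/
theorem Hmap_preimage_zero (m : ℕ) (hm : 2 ≤ m) (x : Fin m → ℂ)
    (havg : ∑ i, x i = 0) (h0 : ∀ i, Ppoly m x (x i) = 0) :
    x = 0 := by
  set P := Ppol m x with hP
  have hmC : ((m : ℂ) + 1) ≠ 0 := by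
    have : (m : ℂ) + 1 = ((m + 1 : ℕ) : ℂ) := by push_cast; ring
    rw [this]; exact Nat.cast_ne_zero.2 (by omega)
  have hderiv : derivative P = C ((m : ℂ) + 1) * Qpoly m x := Ppol_deriv m hm x
  have hdne : derivative P ≠ 0 := by
    rw [hderiv]
    exact mul_ne_zero (C_ne_zero.2 hmC) (Qpoly_monic m x).ne_zero
  have hPne : P ≠ 0 := fun h => hdne (by rw [h, map_zero])
  -- rootMultiplicity in derivative
  set M : Multiset ℂ := Multiset.map x Finset.univ.val with hM
  have hMcard : Multiset.card M = m := by simp [hM]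
  have hd_roots : (derivative P).roots = M := by
    rw [hderiv, roots_C_mul _ hmC, Qpoly_roots]
  -- each value a of x has rootMultiplicity in P ≥ count a M + 1
  have key : ∀ a ∈ M, M.count a + 1 ≤ P.rootMultiplicity a := by
    intro a ha
    obtain ⟨i, _, hi⟩ := Multiset.mem_map.1 ha
    have hroot : P.IsRoot a := by
      rw [IsRoot, ← hi, Ppol_eval]; exact h0 i
    have hpos : 0 < P.rootMultiplicity a := (rootMultiplicity_pos hPne).2 hroot
    have hnzd : ((P.rootMultiplicity a : ℂ)) ∈ nonZeroDivisors ℂ := by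
      refine mem_nonZeroDivisors_of_ne_zero ?_
      exact Nat.cast_ne_zero.2 (by omega)
    have h1 := derivative_rootMultiplicity_of_root_of_mem_nonZeroDivisors hroot hnzd
    have hcount : (derivative P).rootMultiplicity a = M.count a := by
      rw [← count_roots, hd_roots]
    omega
  -- the multiset M + dedup ≤ P.roots
  have hle : M + M.dedup ≤ P.roots := by
    rw [Multiset.le_iff_count]
    intro a
    rw [Multiset.count_add, count_roots]
    by_cases ha : a ∈ M
    · have hk := key a ha
      have hd : M.dedup.count a = 1 := by
        simp [Multiset.count_dedup, ha]
      omega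
    · have h1 : M.count a = 0 := Multiset.count_eq_zero.2 ha
      have h2 : M.dedup.count a = 0 := by
        rw [Multiset.count_dedup, if_neg ha]
      omega
  have hcard : Multiset.card (M + M.dedup) ≤ Multiset.card P.roots :=
    Multiset.card_le_card hle
  have hnd : P.natDegree ≤ m + 1 := by
    rw [hP, Ppol]
    refine le_trans (natDegree_C_mul_le _ _) ?_
    refine le_trans (natDegree_sum_le _ _) ?_
    refine Finset.fold_max_le _ |>.2 ⟨by omega, fun i _ => ?_⟩
    refine le_trans (natDegree_sub_le _ _) ?_
    refine max_le ?_ (by simp)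
    rw [Apoly]
    refine le_trans (natDegree_sum_le _ _) ?_
    refine Finset.fold_max_le _ |>.2 ⟨by omega, fun n hn => ?_⟩
    refine le_trans (natDegree_C_mul_le _ _) ?_
    rw [natDegree_X_pow]
    exact Nat.add_le_add_right (Finset.mem_range_succ_iff.1 hn) 1
  have hroots_le : Multiset.card P.roots ≤ m + 1 := (card_roots' P).trans hnd
  have hdedup : Multiset.card M.dedup ≤ 1 := by
    rw [Multiset.card_add, hMcard] at hcard
    omega
  -- M is nonempty
  have hMne : M ≠ 0 := Multiset.card_pos.1 (by omega)
  have hdcard : Multiset.card M.dedup = 1 := by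
    have h1 : 0 < Multiset.card M.dedup :=
      Multiset.card_pos.2 (fun h => hMne (Multiset.dedup_eq_zero.1 h))
    omega
  obtain ⟨a, hA⟩ := Multiset.card_eq_one.1 hdcard
  have hall : ∀ i, x i = a := by
    intro i
    have hmem : x i ∈ M := Multiset.mem_map_of_mem x (by simp)
    have := Multiset.mem_dedup.2 hmem
    rw [hA, Multiset.mem_singleton] at this
    exact this
  rw [Finset.sum_congr rfl (fun i _ => hall i), Finset.sum_const, card_univ,
    Fintype.card_fin] at havg
  have ha0 : a = 0 := by
    rcases smul_eq_zero.1 havg with h | h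
    · omega
    · exact h
  funext i
  simp [hall i, ha0]
end

section
/- With H : E → E defined by H(x) = P_x ∘ x on the space E of average-zero functions I → ℂ (|I| = m ≥ 2): x ∈ E is a fixed point of H if and only if P_x is a monic centered polynomial of degree m+1 all of whose critical points are fixed points of P_x. Moreover every monic centered polynomial P of degree m+1 with fixed critical points equals P_x for some fixed point x of H. -/
open Finset

open Polynomial

noncomputable def Ipoly (m : ℕ) (x : Fin m → ℂ) : Polynomial ℂ :=
  ∑ n ∈ Finset.range (m + 1), C ((Qpoly m x).coeff n / ((n : ℂ) + 1)) * X ^ (n + 1)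

lemma Aanti_eq (m : ℕ) (x : Fin m → ℂ) (t : ℂ) : Aanti m x t = (Ipoly m x).eval t := by
  rw [Aanti, Ipoly, eval_finset_sum]
  refine Finset.sum_congr rfl fun n _ => ?_
  simp [div_mul_eq_mul_div]

lemma Ipoly_derivative (m : ℕ) (x : Fin m → ℂ) : (Ipoly m x).derivative = Qpoly m x := by
  rw [Ipoly, derivative_sum]
  have h1 : ∀ n ∈ Finset.range (m + 1),
      derivative (C ((Qpoly m x).coeff n / ((n : ℂ) + 1)) * X ^ (n + 1))
        = C ((Qpoly m x).coeff n) * X ^ n := by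
    intro n _
    rw [derivative_C_mul, derivative_X_pow]
    rw [← mul_assoc, ← C_mul, Nat.add_sub_cancel]
    congr 2
    push_cast
    exact div_mul_cancel₀ _ (Nat.cast_add_one_ne_zero n)
  rw [Finset.sum_congr rfl h1]
  conv_rhs => rw [(Qpoly m x).as_sum_range' (m + 1) (by rw [Qpoly_natDegree]; omega)]
  refine Finset.sum_congr rfl fun n _ => ?_
  rw [C_mul_X_pow_eq_monomial]

noncomputable def Pp (m : ℕ) (x : Fin m → ℂ) : Polynomial ℂ :=
  C (((m : ℂ) + 1) / m) * (C (m : ℂ) * Ipoly m x - C (∑ j, (Ipoly m x).eval (x j)))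

lemma Ppoly_eval (m : ℕ) (x : Fin m → ℂ) (t : ℂ) : Ppoly m x t = (Pp m x).eval t := by
  rw [Ppoly, Pp, Finset.sum_sub_distrib, Finset.sum_const, Finset.card_univ, Fintype.card_fin,
    eval_mul, eval_C, eval_sub, eval_mul, eval_C, eval_C]
  simp only [Aanti_eq, nsmul_eq_mul]

lemma Pp_derivative (m : ℕ) (x : Fin m → ℂ) (hm : (m : ℂ) ≠ 0) :
    (Pp m x).derivative = C ((m : ℂ) + 1) * Qpoly m x := by
  rw [Pp, derivative_C_mul, derivative_sub, derivative_C, sub_zero, derivative_C_mul,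
    Ipoly_derivative, ← mul_assoc, ← C_mul]
  congr 2
  field_simp

lemma sum_Ppoly_eq_zero (m : ℕ) (x : Fin m → ℂ) : ∑ j, Ppoly m x (x j) = 0 := by
  simp only [Ppoly, ← Finset.mul_sum]
  have : ∑ i : Fin m, ∑ j : Fin m, (Aanti m x (x i) - Aanti m x (x j)) = 0 := by
    simp only [Finset.sum_sub_distrib, Finset.sum_const, Finset.card_univ, Fintype.card_fin]
    rw [← Finset.smul_sum, sub_self]
  rw [this, mul_zero]

/-- Fixed points of `H` correspond to monic centered polynomials of degree `m+1`
with fixed critical points. -/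
theorem Hmap_fixed_points (m : ℕ) (hm : 2 ≤ m) :
    (∀ x : Fin m → ℂ, (∑ i, x i = 0) → Hmap m x = x →
      ∀ c : ℂ, deriv (Ppoly m x) c = 0 → Ppoly m x c = c) ∧
    (∀ P : Polynomial ℂ, P.Monic → P.natDegree = m + 1 → P.coeff m = 0 →
      (∀ c : ℂ, P.derivative.eval c = 0 → P.eval c = c) →
      ∃ x : Fin m → ℂ, (∑ i, x i = 0) ∧ Hmap m x = x ∧
        ∀ t : ℂ, Ppoly m x t = P.eval t) := by
  have hm0 : (m : ℂ) ≠ 0 := Nat.cast_ne_zero.mpr (by omega)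
  have hm1 : ((m : ℂ) + 1) ≠ 0 := by
    have h : ((m : ℂ) + 1) = ((m + 1 : ℕ) : ℂ) := by push_cast; ring
    rw [h]; exact Nat.cast_ne_zero.mpr (by omega)
  constructor
  · intro x _ hfix c hc
    have hP : Ppoly m x = fun t => (Pp m x).eval t := funext fun t => Ppoly_eval m x t
    rw [hP, Polynomial.deriv, Pp_derivative m x hm0, eval_mul, eval_C] at hc
    have hQ : (Qpoly m x).eval c = 0 := by
      rcases mul_eq_zero.mp hc with h | h
      · exact absurd h hm1
      · exact h
    rw [Qpoly, eval_prod] at hQ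
    obtain ⟨i, -, hi⟩ := Finset.prod_eq_zero_iff.mp hQ
    rw [eval_sub, eval_X, eval_C, sub_eq_zero] at hi
    rw [hi]
    exact congrFun hfix i
  · intro P hmon hdeg hcent hfixP
    have hDdeg : P.derivative.natDegree = m := by
      have h1 := Polynomial.degree_derivative_eq P (by rw [hdeg]; omega)
      rw [hdeg] at h1
      exact natDegree_eq_of_degree_eq_some (by simpa using h1)
    have hPl : P.coeff (m + 1) = 1 := by rw [← hdeg]; exact hmon.coeff_natDegree
    have hDlead : P.derivative.leadingCoeff = (m : ℂ) + 1 := by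
      rw [Polynomial.leadingCoeff, hDdeg, Polynomial.coeff_derivative, hPl, one_mul]
    set Q' := C (((m : ℂ) + 1)⁻¹) * P.derivative with hQ'def
    have hQ'monic : Q'.Monic := by
      rw [Polynomial.Monic, hQ'def, leadingCoeff_mul, leadingCoeff_C, hDlead,
        inv_mul_cancel₀ hm1]
    have hQ'deg : Q'.natDegree = m := by
      rw [hQ'def, natDegree_C_mul (inv_ne_zero hm1), hDdeg]
    have hsplits : Q'.Splits := IsAlgClosed.splits Q'
    have hcard : Multiset.card Q'.roots = m := by
      rw [splits_iff_card_roots.mp hsplits, hQ'deg]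
    set l := Q'.roots.toList with hldef
    have hlen : l.length = m := by rw [hldef, Multiset.length_toList, hcard]
    set x : Fin m → ℂ := fun i => l.get (Fin.cast hlen.symm i) with hxdef
    have hofn : List.ofFn x = l := by
      rw [hxdef, ← List.ofFn_congr hlen l.get, List.ofFn_get]
    have hroots : (l : Multiset ℂ) = Q'.roots := Multiset.coe_toList _
    have hQx : Qpoly m x = Q' := by
      rw [Qpoly, hsplits.eq_prod_roots_of_monic hQ'monic, ← hroots,
        Multiset.map_coe, Multiset.prod_coe, ← hofn, List.map_ofFn, List.prod_ofFn]
      rfl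
    have hsum : ∑ i, x i = 0 := by
      have hnext : Q'.nextCoeff = 0 := by
        rw [nextCoeff_of_natDegree_pos (by rw [hQ'deg]; omega), hQ'deg, hQ'def,
          coeff_C_mul, Polynomial.coeff_derivative]
        have hm1n : m - 1 + 1 = m := by omega
        rw [hm1n, hcent, zero_mul, mul_zero]
      have h1 := hsplits.nextCoeff_eq_neg_sum_roots_of_monic hQ'monic
      rw [hnext] at h1
      have h2 : ∑ i, x i = Q'.roots.sum := by
        rw [← hroots, Multiset.sum_coe, ← hofn, List.sum_ofFn]
      rw [h2, ← neg_eq_zero, ← h1]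
    have hPpD : (Pp m x).derivative = P.derivative := by
      rw [Pp_derivative m x hm0, hQx, hQ'def, ← mul_assoc, ← C_mul,
        mul_inv_cancel₀ hm1, C_1, one_mul]
    have hdiff : P - Pp m x = C ((P - Pp m x).coeff 0) :=
      eq_C_of_derivative_eq_zero (by rw [derivative_sub, hPpD, sub_self])
    have hcrit : ∀ i, P.derivative.eval (x i) = 0 := by
      intro i
      have hq : Q'.eval (x i) = 0 := by
        rw [← hQx, Qpoly, eval_prod]
        refine Finset.prod_eq_zero (Finset.mem_univ i) ?_
        simp
      rw [hQ'def, eval_mul, eval_C] at hq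
      rcases mul_eq_zero.mp hq with h | h
      · exact absurd h (inv_ne_zero hm1)
      · exact h
    have hPx : ∀ i, P.eval (x i) = x i := fun i => hfixP _ (hcrit i)
    have hsumPp : ∑ j, (Pp m x).eval (x j) = 0 := by
      have h := sum_Ppoly_eq_zero m x
      simpa [Ppoly_eval] using h
    have hc0 : (P - Pp m x).coeff 0 = 0 := by
      have h3 : ∑ j, (P - Pp m x).eval (x j) = (m : ℂ) * (P - Pp m x).coeff 0 := by
        rw [Finset.sum_congr rfl fun j _ => by rw [hdiff, eval_C],
          Finset.sum_const, Finset.card_univ, Fintype.card_fin, nsmul_eq_mul]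
      have h4 : ∑ j, (P - Pp m x).eval (x j) = 0 := by
        simp only [eval_sub]
        rw [Finset.sum_sub_distrib, hsumPp, sub_zero,
          Finset.sum_congr rfl fun j _ => hPx j, hsum]
      rw [h4] at h3
      exact (mul_eq_zero.mp h3.symm).resolve_left hm0
    have hPeq : P = Pp m x := by
      have h := hdiff
      rw [hc0, C_0, sub_eq_zero] at h
      exact h
    refine ⟨x, hsum, ?_, fun t => by rw [Ppoly_eval, hPeq]⟩
    funext i
    show Ppoly m x (x i) = x i
    rw [Ppoly_eval, ← hPeq]
    exact hPx i
end

section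
/- Let m ≥ 2 and P(z) = ((m+1)/m)z + z^{m+1}. Then all m critical points of P are simple and are fixed points of P, and P is the unique monic centered polynomial of degree m+1 with m distinct (simple) critical points all of which are fixed. In particular, if c is a critical point of P then P''(c) = −(m+1)/c. -/
open Polynomial

lemma card_pow_eq_aux (m : ℕ) (hm : 2 ≤ m) (a : ℂ) (ha : a ≠ 0) :
    {c : ℂ | c ^ m = a}.ncard = m := by
  classical
  set q : Polynomial ℂ := X ^ m - C a with hq
  have hq0 : q ≠ 0 := X_pow_sub_C_ne_zero (by omega) a
  have hdeg : q.natDegree = m := natDegree_X_pow_sub_C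
  have hroots : Multiset.card q.roots = m := by
    rw [← hdeg]
    exact (splits_iff_card_roots (f := q)).mp (IsAlgClosed.splits q)
  have hnodup : q.roots.Nodup := by
    rw [Multiset.nodup_iff_count_le_one]
    intro c
    rw [count_roots]
    by_contra h
    push_neg at h
    have h2 := (one_lt_rootMultiplicity_iff_isRoot hq0).mp h
    have hc : c ^ m = a := by
      have := h2.1
      simp only [IsRoot, hq, eval_sub, eval_pow, eval_X, eval_C, sub_eq_zero] at this
      exact this
    have hc0 : c ≠ 0 := fun h0 => ha (by rw [← hc, h0, zero_pow (by omega : m ≠ 0)])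
    have hd2 := h2.2
    rw [IsRoot, hq] at hd2
    simp only [derivative_sub, derivative_X_pow, derivative_C, sub_zero, eval_mul, eval_pow,
      eval_natCast, eval_X, mul_eq_zero, eval_C] at hd2
    rcases hd2 with h3 | h3
    · exact (Nat.cast_ne_zero (R := ℂ)).mpr (by omega) h3
    · exact hc0 (pow_eq_zero_iff (by omega : m - 1 ≠ 0) |>.mp h3)
  have hset : {c : ℂ | c ^ m = a} = ↑q.roots.toFinset := by
    ext c
    simp [hq, mem_roots hq0, IsRoot, sub_eq_zero]
    exact fun _ h => hq0 (by rw [hq, h, sub_self])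
  rw [hset, Set.ncard_coe_finset, Multiset.toFinset_card_of_nodup hnodup, hroots]


lemma uniq_aux (m : ℕ) (hm : 2 ≤ m)
    (Q : Polynomial ℂ) (hQm : Q.Monic) (hQd : Q.natDegree = m + 1) (hQc : Q.coeff m = 0)
    (hcrit : ∀ c : ℂ, Q.derivative.eval c = 0 →
        Q.derivative.derivative.eval c ≠ 0 ∧ Q.eval c = c) :
    Q = X ^ (m+1) + C (((m:ℂ)+1)/m) * X := by
  classical
  have hm0 : (m : ℂ) ≠ 0 := Nat.cast_ne_zero.mpr (by omega)
  have hmonic : Q.coeff (m+1) = 1 := by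
    have := hQm.coeff_natDegree; rwa [hQd] at this
  set Q' := derivative Q with hQ'
  have hcoeffQ'm : Q'.coeff m = (m:ℂ) + 1 := by
    rw [hQ', coeff_derivative, hmonic]; push_cast; ring
  have hQ'0 : Q' ≠ 0 := fun h => by
    rw [h] at hcoeffQ'm
    simp at hcoeffQ'm
    have : ((m + 1 : ℕ) : ℂ) = 0 := by push_cast; linear_combination -hcoeffQ'm
    exact (by omega : m + 1 ≠ 0) (Nat.cast_eq_zero.mp this)
  have hm1 : (m : ℂ) + 1 ≠ 0 := by
    have : ((m + 1 : ℕ) : ℂ) ≠ 0 := Nat.cast_ne_zero.mpr (by omega)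
    push_cast at this; exact this
  have hQ'deg : Q'.natDegree = m := by
    refine le_antisymm ?_ (le_natDegree_of_ne_zero (by rw [hcoeffQ'm]; exact hm1))
    have h := natDegree_derivative_le Q
    rw [← hQ', hQd] at h
    omega
  have hroots : Multiset.card Q'.roots = m := by
    rw [← hQ'deg]
    exact splits_iff_card_roots.mp (IsAlgClosed.splits Q')
  have hnodup : Q'.roots.Nodup := by
    rw [Multiset.nodup_iff_count_le_one]
    intro c
    rw [count_roots]
    by_contra h
    push_neg at h
    have h2 := (one_lt_rootMultiplicity_iff_isRoot hQ'0).mp h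
    exact (hcrit c h2.1).1 h2.2
  have hcard : Q'.roots.toFinset.card = m := by
    rw [Multiset.toFinset_card_of_nodup hnodup, hroots]
  set D : Polynomial ℂ := C ((m:ℂ)+1) * (Q - X) - X * Q' with hD
  have hDcoeff : ∀ n : ℕ, m ≤ n → D.coeff n = 0 := by
    intro n hn
    obtain ⟨k, rfl⟩ : ∃ k, n = k + 1 := ⟨n - 1, by omega⟩
    have hx : (X : Polynomial ℂ).coeff (k+1) = 0 := coeff_X_of_ne_one (by omega)
    rw [hD, coeff_sub, coeff_C_mul, coeff_sub, hx, coeff_X_mul, hQ', coeff_derivative]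
    rcases lt_trichotomy k m with hk | hk | hk
    · have hkm : k + 1 = m := by omega
      rw [hkm, hQc]; ring
    · subst hk
      rw [hmonic]; push_cast; ring
    · rw [coeff_eq_zero_of_natDegree_lt (by rw [hQd]; omega)]; ring
  have hD0 : D = 0 := by
    by_cases h : D = 0
    · exact h
    refine eq_zero_of_natDegree_lt_card_of_eval_eq_zero' D Q'.roots.toFinset ?_ ?_
    · intro c hc
      have hcr : Q'.eval c = 0 := by
        have := Multiset.mem_toFinset.mp hc
        exact (mem_roots hQ'0).mp this
      have hfix : Q.eval c = c := (hcrit c hcr).2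
      simp only [hD, eval_sub, eval_mul, eval_C, eval_X, hfix, hcr]
      ring
    · rw [hcard]
      refine (natDegree_lt_iff_degree_lt h).mpr ((degree_lt_iff_coeff_zero D m).mpr ?_)
      intro j hj
      exact hDcoeff j hj
  have hzero : ∀ n : ℕ, D.coeff n = 0 := fun n => by rw [hD0]; simp
  have hco : ∀ k : ℕ, (X * Q').coeff (k+1) = Q.coeff (k+1) * ((k:ℂ)+1) := by
    intro k; rw [coeff_X_mul, hQ', coeff_derivative]
  have hQ0 : Q.coeff 0 = 0 := by
    have h := hzero 0
    rw [hD, coeff_sub, coeff_C_mul, coeff_sub, mul_coeff_zero, coeff_X_zero] at h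
    have : ((m:ℂ)+1) * Q.coeff 0 = 0 := by linear_combination h
    exact (mul_eq_zero.mp this).resolve_left hm1
  have hQ1 : Q.coeff 1 = ((m:ℂ)+1)/m := by
    have h := hzero 1
    rw [hD, coeff_sub, coeff_C_mul, coeff_sub, coeff_X_one, (by norm_num : (1:ℕ) = 0 + 1), hco 0] at h
    have h2 : (m:ℂ) * Q.coeff 1 = (m:ℂ) + 1 := by push_cast at h; linear_combination h
    field_simp
    linear_combination h2
  have hmid : ∀ k : ℕ, k ≠ 0 → k ≠ m → Q.coeff (k+1) = 0 := by
    intro k hk0 hkm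
    have h := hzero (k+1)
    have hx : (X : Polynomial ℂ).coeff (k+1) = 0 := coeff_X_of_ne_one (by omega)
    rw [hD, coeff_sub, coeff_C_mul, coeff_sub, hx, hco k] at h
    have hne : (m:ℂ) - k ≠ 0 := sub_ne_zero.mpr (by exact_mod_cast hkm ∘ Eq.symm ∘ Nat.cast_inj.mp)
    have h2 : ((m:ℂ) - k) * Q.coeff (k+1) = 0 := by linear_combination h
    exact (mul_eq_zero.mp h2).resolve_left hne
  ext n
  rw [coeff_add, coeff_X_pow, coeff_C_mul, coeff_X]
  rcases n with _ | n
  · simp [hQ0, (by omega : ¬ (0 = m + 1))]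
  rcases n with _ | k
  · simp [hQ1, (by omega : ¬ (1 = m + 1))]
    omega
  · by_cases hk : k + 2 = m + 1
    · rw [if_pos (by omega : k + 1 + 1 = m + 1), if_neg (by omega), (by omega : k + 1 + 1 = m + 1), hmonic]; ring
    · rw [if_neg (by omega : ¬ k + 1 + 1 = m + 1), if_neg (by omega)]
      have := hmid (k+1) (by omega) (by omega)
      simpa using this

/-- The polynomial `P z = ((m+1)/m) z + z^(m+1)` has `m` simple critical points,
all fixed, with `P''(c) = -(m+1)/c` at each critical point `c`, and it is the
unique monic centered polynomial of degree `m+1` all of whose critical points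
are simple and fixed. -/
theorem unique_monic_centered_fixed_simple_critical (m : ℕ) (hm : 2 ≤ m)
    (P : ℂ → ℂ) (hP : ∀ z, P z = (((m : ℂ) + 1) / m) * z + z ^ (m + 1)) :
    (∀ c : ℂ, deriv P c = 0 →
      c ≠ 0 ∧ deriv (deriv P) c ≠ 0 ∧ P c = c ∧
      deriv (deriv P) c = -((m : ℂ) + 1) / c) ∧
    ({c : ℂ | deriv P c = 0}.ncard = m) ∧
    (∀ Q : Polynomial ℂ, Q.Monic → Q.natDegree = m + 1 → Q.coeff m = 0 →
      (∀ c : ℂ, Q.derivative.eval c = 0 →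
        Q.derivative.derivative.eval c ≠ 0 ∧ Q.eval c = c) →
      ∀ z : ℂ, Q.eval z = P z) := by
  have hm0 : (m : ℂ) ≠ 0 := Nat.cast_ne_zero.mpr (by omega)
  have hm1 : (m : ℂ) + 1 ≠ 0 := by
    have : ((m + 1 : ℕ) : ℂ) ≠ 0 := Nat.cast_ne_zero.mpr (by omega)
    push_cast at this; exact this
  have hPfun : P = fun z => (((m : ℂ) + 1) / m) * z + z ^ (m + 1) := funext hP
  have hP' : ∀ z : ℂ, HasDerivAt P (((m:ℂ)+1)/m + ((m:ℂ)+1) * z ^ m) z := by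
    intro z
    rw [hPfun]
    have h := ((hasDerivAt_id z).const_mul (((m:ℂ)+1)/m)).add (hasDerivAt_pow (m+1) z)
    convert h using 1
    push_cast
    · rfl
    · rfl
    · funext y; simp
    · push_cast; simp
  have hd1 : deriv P = fun z => ((m:ℂ)+1)/m + ((m:ℂ)+1) * z ^ m :=
    funext fun z => (hP' z).deriv
  have hd2 : ∀ z : ℂ, deriv (deriv P) z = ((m:ℂ)+1) * ((m:ℂ) * z ^ (m-1)) := by
    intro z
    rw [hd1]
    exact (((hasDerivAt_pow m z).const_mul ((m:ℂ)+1)).const_add (((m:ℂ)+1)/m)).deriv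
  refine ⟨?_, ?_, ?_⟩
  · intro c hc
    rw [hd1] at hc
    simp only at hc
    have hcm : c ^ m = -(1/(m:ℂ)) := by
      have h2 : ((m:ℂ)+1) * (c ^ m + 1/m) = 0 := by
        rw [← hc]; field_simp; ring
      have h3 := (mul_eq_zero.mp h2).resolve_left hm1
      linear_combination h3
    have hc0 : c ≠ 0 := by
      intro h0
      rw [h0, zero_pow (by omega : m ≠ 0)] at hcm
      simp [hm0] at hcm
    have hpow : c ^ (m-1) * c = c ^ m := by
      rw [← pow_succ]; congr 1; omega
    have hdd : deriv (deriv P) c = -((m : ℂ) + 1) / c := by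
      rw [hd2]
      have hcm' : (m:ℂ) * c ^ m = -1 := by rw [hcm]; field_simp
      field_simp
      linear_combination hcm' + (m:ℂ) * hpow
    refine ⟨hc0, ?_, ?_, hdd⟩
    · rw [hdd, neg_div]
      exact neg_ne_zero.mpr (div_ne_zero hm1 hc0)
    · rw [hP c]
      have : c ^ (m+1) = -(1/(m:ℂ)) * c := by rw [pow_succ, ← hcm]
      rw [this]
      field_simp
      ring
  · have hset : {c : ℂ | deriv P c = 0} = {c : ℂ | c ^ m = -(1/(m:ℂ))} := by
      ext c
      rw [hd1]
      simp only [Set.mem_setOf_eq]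
      constructor
      · intro hc
        have h2 : ((m:ℂ)+1) * (c ^ m + 1/m) = 0 := by
          rw [← hc]; field_simp; ring
        have h3 := (mul_eq_zero.mp h2).resolve_left hm1
        linear_combination h3
      · intro hc
        rw [hc]
        field_simp
        ring
    rw [hset]
    exact card_pow_eq_aux m hm _ (by simp [hm0])
  · intro Q hQm hQd hQc hcrit z
    have hQ := uniq_aux m hm Q hQm hQd hQc hcrit
    rw [hQ, hP z]
    simp only [eval_add, eval_pow, eval_X, eval_mul, eval_C]
    ring
end

section
/- Let P : ℂ → ℂ be a polynomial of degree d ≥ 2 and D_R the open disk of radius R centered at 0 chosen so that P^{-1}(D_R) is compactly contained in D_R. Let q be an integrable meromorphic quadratic differential on D_R (finitely many simple poles), and define the push-forward (P_*q)(y) = Σ_{g} g^*q where g ranges over local inverse branches of P. Then ∫_{D_R} |P_*q| ≤ ∫_{P^{-1}(D_R)} |q| < ∫_{D_R} |q|, i.e., the push-forward operator is a strict contraction for the L¹ norm, provided ∫_{D_R}|q| > 0 and not all mass of q is concentrated on P^{-1}(D_R). -/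
open Metric MeasureTheory
open scoped ENNReal NNReal

open Set Function in
private lemma det_complex_mul (c : ℂ) :
    (((1 : ℂ →L[ℂ] ℂ).smulRight c).restrictScalars ℝ).det = Complex.normSq c := by
  have h : ((((1 : ℂ →L[ℂ] ℂ).smulRight c).restrictScalars ℝ : ℂ →L[ℝ] ℂ) : ℂ →ₗ[ℝ] ℂ)
      = Algebra.lmul ℝ ℂ c := by
    apply LinearMap.ext
    intro x
    simp [mul_comm]
  calc (((1 : ℂ →L[ℂ] ℂ).smulRight c).restrictScalars ℝ).det
      = LinearMap.det (Algebra.lmul ℝ ℂ c) := by rw [ContinuousLinearMap.det, h]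
    _ = Complex.normSq c := by rw [← Algebra.norm_apply, Algebra.norm_complex_apply]

/-- **Strict contraction of the push-forward operator on quadratic differentials.**
Let `P` be a polynomial of degree `d ≥ 2` with `P⁻¹(D_R)` compactly contained in
`D_R`, and let `q = f dz²` be an integrable meromorphic quadratic differential on
`D_R` with finitely many simple poles. The push-forward `P_* q = (∑_g g^* q) dz²`
has density `y ↦ ∑_{x ∈ P⁻¹(y)} f x / (P' x)²`, and
`∫_{D_R} |P_* q| ≤ ∫_{P⁻¹(D_R)} |q| < ∫_{D_R} |q|`,
provided `q` has positive mass on `D_R` not all concentrated on `P⁻¹(D_R)`. -/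
theorem pushforward_quadratic_differential_contracts
    (P : Polynomial ℂ) (hd : 2 ≤ P.natDegree) (R : ℝ) (hR : 0 < R)
    (hcomp : closure (P.eval ⁻¹' ball (0 : ℂ) R) ⊆ ball (0 : ℂ) R)
    (f : ℂ → ℂ)
    (hmero : ∃ S : Finset ℂ, (∀ z ∈ ball (0 : ℂ) R \ (S : Set ℂ), AnalyticAt ℂ f z) ∧
      ∀ s ∈ S, AnalyticAt ℂ (fun z => (z - s) * f z) s)
    (hint : IntegrableOn (fun x => ‖f x‖) (ball (0 : ℂ) R))
    (hpos : 0 < ∫ x in ball (0 : ℂ) R, ‖f x‖)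
    (hcompl : 0 < ∫ x in ball (0 : ℂ) R \ P.eval ⁻¹' ball (0 : ℂ) R, ‖f x‖)
    (Pf : ℂ → ℂ)
    (hPf : ∀ y, Pf y = ∑ x ∈ (P - Polynomial.C y).roots.toFinset,
      f x / (P.derivative.eval x) ^ 2) :
    (∫ y in ball (0 : ℂ) R, ‖Pf y‖) ≤ (∫ x in P.eval ⁻¹' ball (0 : ℂ) R, ‖f x‖) ∧
    (∫ x in P.eval ⁻¹' ball (0 : ℂ) R, ‖f x‖) < ∫ x in ball (0 : ℂ) R, ‖f x‖ := by
  classical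
  open Set Function in
  set B : Set ℂ := ball (0 : ℂ) R with hB
  set pre : Set ℂ := P.eval ⁻¹' B with hpredef
  have hPc : Continuous (fun x : ℂ => P.eval x) := P.continuous
  have hpreO : IsOpen pre := IsOpen.preimage hPc isOpen_ball
  have hpre_sub : pre ⊆ B := subset_closure.trans hcomp
  -- Part 2 : strict inequality
  have hsplit : ∫ x in B, ‖f x‖ = (∫ x in pre, ‖f x‖) + ∫ x in B \ pre, ‖f x‖ := by
    rw [← MeasureTheory.setIntegral_union disjoint_sdiff_self_right
      (measurableSet_ball.diff hpreO.measurableSet)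
      (hint.mono_set hpre_sub) (hint.mono_set Set.diff_subset),
      Set.union_diff_cancel hpre_sub]
  have part2 : (∫ x in pre, ‖f x‖) < ∫ x in B, ‖f x‖ := by
    rw [hsplit]; linarith
  refine ⟨?_, part2⟩
  -- Part 1
  by_cases hI : Integrable (fun y => ‖Pf y‖) (volume.restrict B)
  swap
  · rw [MeasureTheory.integral_undef hI]
    exact integral_nonneg fun x => norm_nonneg _
  obtain ⟨S, hS1, -⟩ := hmero
  have hne0 : ∀ y : ℂ, P - Polynomial.C y ≠ 0 := by
    intro y h
    have h2 : (P - Polynomial.C y).natDegree = P.natDegree := Polynomial.natDegree_sub_C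
    rw [h, Polynomial.natDegree_zero] at h2
    omega
  have hmemFib : ∀ y x : ℂ, x ∈ (P - Polynomial.C y).roots.toFinset ↔ P.eval x = y := by
    intro y x
    rw [Multiset.mem_toFinset, Polynomial.mem_roots (hne0 y)]
    simp [Polynomial.IsRoot, sub_eq_zero]
  set crit : Set ℂ := {x : ℂ | P.derivative.eval x = 0} with hcrit
  have hcritC : IsClosed crit := isClosed_eq (Polynomial.continuous _) continuous_const
  set pre' : Set ℂ := pre \ crit with hpre'
  have hpre'O : IsOpen pre' := hpreO.sdiff hcritC
  -- family of sets on which `P.eval` is injective with continuous local inverse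
  set U : Set (Set ℂ) := {v | IsOpen v ∧ v ⊆ pre' ∧ Set.InjOn P.eval v ∧
      ContinuousOn (Function.invFunOn P.eval v) (P.eval '' v)} with hU
  have hempty : (∅ : Set ℂ) ∈ U := by
    refine ⟨isOpen_empty, Set.empty_subset _, Set.injOn_empty _, ?_⟩
    rw [Set.image_empty]; exact continuousOn_empty _
  have hcover : ⋃₀ U = pre' := by
    apply subset_antisymm
    · exact Set.sUnion_subset fun v hv => hv.2.1
    · intro x hx
      have hnex : P.derivative.eval x ≠ 0 := fun h => hx.2 h
      have hsd := P.hasStrictDerivAt x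
      have hfd := hsd.hasStrictFDerivAt_equiv hnex
      set e0 := hfd.toOpenPartialHomeomorph (fun x => P.eval x) with he0
      have hcoe : ⇑e0 = fun x => P.eval x := hfd.toOpenPartialHomeomorph_coe
      have hxs : x ∈ e0.source := hfd.mem_toOpenPartialHomeomorph_source
      set v := e0.source ∩ pre' with hv
      have hinj : Set.InjOn P.eval v := by
        intro a ha b hb hab
        apply e0.injOn ha.1 hb.1
        rw [hcoe]; exact hab
      have hsymm : ∀ y ∈ P.eval '' v, Function.invFunOn P.eval v y = e0.symm y := by
        rintro y ⟨a, ha, rfl⟩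
        have h1 : Function.invFunOn P.eval v (P.eval a) ∈ v :=
          Function.invFunOn_mem (f := fun a => Polynomial.eval a P) ⟨a, ha, rfl⟩
        have h2 : P.eval (Function.invFunOn P.eval v (P.eval a)) = P.eval a :=
          Function.invFunOn_eq (f := fun a => Polynomial.eval a P) ⟨a, ha, rfl⟩
        have h3 : e0.symm (P.eval a) = a := by
          have := e0.left_inv ha.1
          rw [hcoe] at this
          exact this
        rw [h3]
        exact hinj h1 ha h2
      have himg : P.eval '' v ⊆ e0.target := by
        rintro y ⟨a, ha, rfl⟩
        have : e0 a ∈ e0.target := e0.map_source ha.1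
        rwa [hcoe] at this
      have hcont : ContinuousOn (Function.invFunOn P.eval v) (P.eval '' v) :=
        ContinuousOn.congr (e0.continuousOn_symm.mono himg) hsymm
      exact ⟨v, ⟨e0.open_source.inter hpre'O, Set.inter_subset_right, hinj, hcont⟩, hxs, hx⟩
  obtain ⟨T, hTc, hTsub, hTU⟩ :=
    TopologicalSpace.isOpen_sUnion_countable U (fun s hs => hs.1)
  obtain ⟨u, huT⟩ := (hTc.insert ∅).exists_eq_range (Set.insert_nonempty _ _)
  have huU : ∀ i, u i ∈ U := by
    intro i
    have hmem : u i ∈ insert (∅ : Set ℂ) T := by rw [huT]; exact Set.mem_range_self i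
    rcases Set.mem_insert_iff.1 hmem with h | h
    · rw [h]; exact hempty
    · exact hTsub h
  have hiU : ⋃ i, u i = pre' := by
    rw [← Set.sUnion_range, ← huT, Set.sUnion_insert, Set.empty_union, hTU, hcover]
  set V : ℕ → Set ℂ := disjointed u with hV
  have hVsub : ∀ i, V i ⊆ u i := disjointed_subset u
  have hVdisj : Pairwise (Disjoint on V) := disjoint_disjointed u
  have hVU : ⋃ i, V i = pre' := iUnion_disjointed.trans hiU
  have hVmeas : ∀ i, MeasurableSet (V i) :=
    MeasurableSet.disjointed fun i => (huU i).1.measurableSet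
  have hVinj : ∀ i, Set.InjOn P.eval (V i) := fun i => (huU i).2.2.1.mono (hVsub i)
  have hVpre' : ∀ i, V i ⊆ pre' := fun i => (hVsub i).trans (huU i).2.1
  set σ : ℕ → ℂ → ℂ := fun i => Function.invFunOn P.eval (u i) with hσ
  have hσx : ∀ i, ∀ x ∈ u i, σ i (P.eval x) = x := by
    intro i x hx
    exact (huU i).2.2.1 (Function.invFunOn_mem (f := fun a => Polynomial.eval a P) ⟨x, hx, rfl⟩) hx
      (Function.invFunOn_eq (f := fun a => Polynomial.eval a P) ⟨x, hx, rfl⟩)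
  set trm : ℂ → ℝ≥0∞ := fun x => ENNReal.ofReal ‖f x / (P.derivative.eval x) ^ 2‖ with htrm
  set W : ℕ → Set ℂ := fun i => P.eval '' V i with hW
  have hWmeas : ∀ i, MeasurableSet (W i) := fun i =>
    (hVmeas i).image_of_continuousOn_injOn hPc.continuousOn (hVinj i)
  have hWB : ∀ i, W i ⊆ B := by
    rintro i y ⟨x, hx, rfl⟩
    exact (hVpre' i hx).1
  set t : ℕ → ℂ → ℝ≥0∞ := fun i => (W i).indicator (fun y => trm (σ i y)) with ht
  have hσV : ∀ i, ∀ y ∈ W i, σ i y ∈ V i ∧ P.eval (σ i y) = y := by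
    rintro i y ⟨x, hx, rfl⟩
    rw [hσx i x (hVsub i hx)]
    exact ⟨hx, rfl⟩
  -- pointwise bound
  have hpoint : ∀ y ∈ B, ENNReal.ofReal ‖Pf y‖ ≤ ∑' i, t i y := by
    intro y hy
    rw [hPf y]
    have h1 : ENNReal.ofReal ‖∑ x ∈ (P - Polynomial.C y).roots.toFinset,
        f x / (P.derivative.eval x) ^ 2‖
        ≤ ∑ x ∈ (P - Polynomial.C y).roots.toFinset, trm x := by
      refine le_trans (ENNReal.ofReal_le_ofReal (norm_sum_le _ _)) ?_
      rw [ENNReal.ofReal_sum_of_nonneg fun _ _ => norm_nonneg _]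
    refine h1.trans ?_
    set Fib := (P - Polynomial.C y).roots.toFinset with hFib
    set A := Fib.filter (fun x => x ∈ pre') with hA
    have hsum : ∑ x ∈ Fib, trm x = ∑ x ∈ A, trm x := by
      rw [hA]
      symm
      apply Finset.sum_filter_of_ne
      intro x hx hne
      have hPxy : P.eval x = y := (hmemFib y x).1 hx
      have hxpre : x ∈ pre := by
        rw [hpredef, Set.mem_preimage, hPxy]; exact hy
      by_contra hx'
      have hc : P.derivative.eval x = 0 := by
        by_contra hc
        exact hx' ⟨hxpre, hc⟩
      apply hne
      simp [htrm, hc]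
    rw [hsum]
    have hchoice : ∀ x : {z // z ∈ A}, ∃ i, (x : ℂ) ∈ V i := by
      intro x
      have hx' : (x : ℂ) ∈ pre' := (Finset.mem_filter.1 x.2).2
      rw [← hVU] at hx'
      exact Set.mem_iUnion.1 hx'
    choose ix hix using hchoice
    have hPA : ∀ x : {z // z ∈ A}, P.eval (x : ℂ) = y := fun x =>
      (hmemFib y x).1 (Finset.mem_filter.1 x.2).1
    have htrm_t : ∀ x : {z // z ∈ A}, t (ix x) y = trm (x : ℂ) := by
      intro x
      have hyW : y ∈ W (ix x) := ⟨x, hix x, hPA x⟩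
      rw [ht]
      simp only
      rw [Set.indicator_of_mem hyW, ← hPA x, hσx (ix x) x (hVsub _ (hix x))]
    have hinj_ix : Function.Injective ix := by
      intro a b hab
      have h1 : (a : ℂ) ∈ u (ix a) := hVsub _ (hix a)
      have h2 : (b : ℂ) ∈ u (ix a) := by rw [hab]; exact hVsub _ (hix b)
      have := (huU (ix a)).2.2.1 h1 h2 (by
        show Polynomial.eval (a : ℂ) P = Polynomial.eval (b : ℂ) P
        rw [hPA a, hPA b])
      exact Subtype.ext this
    calc ∑ x ∈ A, trm x
        = ∑ x ∈ A.attach, trm (x : ℂ) := (Finset.sum_attach _ _).symm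
      _ = ∑ x ∈ A.attach, t (ix x) y :=
          Finset.sum_congr rfl fun x _ => (htrm_t x).symm
      _ = ∑ j ∈ A.attach.image ix, t j y :=
          (Finset.sum_image (f := fun j => t j y) (g := ix) fun a _ b _ h => hinj_ix h).symm
      _ ≤ ∑' j, t j y := ENNReal.sum_le_tsum _
  -- continuity of the integrand away from poles and critical points
  have hfScont : ContinuousOn trm (pre' \ (S : Set ℂ)) := by
    have hfc : ContinuousOn f (pre' \ (S : Set ℂ)) := by
      intro z hz
      exact (hS1 z ⟨hpre_sub hz.1.1, hz.2⟩).continuousAt.continuousWithinAt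
    have hden : ContinuousOn (fun x : ℂ => (P.derivative.eval x) ^ 2) (pre' \ (S : Set ℂ)) :=
      ((Polynomial.continuous _).pow 2).continuousOn
    have hdne : ∀ x ∈ pre' \ (S : Set ℂ), (P.derivative.eval x) ^ 2 ≠ 0 := by
      intro x hx
      exact pow_ne_zero _ fun h => hx.1.2 h
    exact ENNReal.continuous_ofReal.comp_continuousOn ((hfc.div hden hdne).norm)
  have hNS : volume (P.eval '' (S : Set ℂ)) = 0 :=
    (S.finite_toSet.image _).measure_zero _
  -- measurability of each `t i`
  have htmeas : ∀ i, AEMeasurable (t i) (volume.restrict B) := by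
    intro i
    rw [ht]
    simp only
    rw [aemeasurable_indicator_iff (hWmeas i), Measure.restrict_restrict (hWmeas i),
      Set.inter_eq_self_of_subset_left (hWB i),
      ← Measure.restrict_congr_set (diff_null_ae_eq_self hNS)]
    apply ContinuousOn.aemeasurable ?_
      ((hWmeas i).diff ((S.finite_toSet.image _).measurableSet))
    apply hfScont.comp ((huU i).2.2.2.mono ?_) ?_
    · intro y hy
      exact Set.image_mono (hVsub i) hy.1
    · intro y hy
      obtain ⟨hv, hP⟩ := hσV i y hy.1
      refine ⟨hVpre' i hv, ?_⟩
      intro hs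
      exact hy.2 ⟨σ i y, hs, hP⟩
  -- change of variables on each piece
  have hCoV : ∀ i, (∫⁻ y in B, t i y) ≤ ∫⁻ x in V i, ENNReal.ofReal ‖f x‖ := by
    intro i
    have h1 : (∫⁻ y in B, t i y) = ∫⁻ y in W i, trm (σ i y) := by
      rw [ht]
      simp only
      rw [lintegral_indicator (hWmeas i), Measure.restrict_restrict (hWmeas i),
        Set.inter_eq_self_of_subset_left (hWB i)]
    rw [h1]
    set D : ℂ → (ℂ →L[ℝ] ℂ) :=
      fun x => ((1 : ℂ →L[ℂ] ℂ).smulRight (P.derivative.eval x)).restrictScalars ℝ with hD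
    have hderiv : ∀ x ∈ V i, HasFDerivWithinAt P.eval (D x) (V i) x := by
      intro x _
      exact (((P.hasStrictDerivAt x).hasDerivAt).hasFDerivAt.restrictScalars ℝ).hasFDerivWithinAt
    have hCV : (∫⁻ y in W i, trm (σ i y)) =
        ∫⁻ x in V i, ENNReal.ofReal |(D x).det| * trm (σ i (P.eval x)) :=
      lintegral_image_eq_lintegral_abs_det_fderiv_mul volume (hVmeas i) hderiv (hVinj i)
        (fun y => trm (σ i y))
    rw [hCV]
    apply le_of_eq
    apply setLIntegral_congr_fun (hVmeas i)
    intro x hx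
    have hPne : P.derivative.eval x ≠ 0 := fun h => (hVpre' i hx).2 h
    have hdet : (D x).det = Complex.normSq (P.derivative.eval x) := det_complex_mul _
    beta_reduce
    rw [hσx i x (hVsub i hx), hdet,
      abs_of_nonneg (Complex.normSq_nonneg _), htrm]
    simp only
    rw [← ENNReal.ofReal_mul (Complex.normSq_nonneg _)]
    congr 1
    rw [norm_div, norm_pow]
    have h2 : Complex.normSq (P.derivative.eval x) = ‖P.derivative.eval x‖ ^ 2 := by
      rw [Complex.normSq_eq_norm_sq]
    rw [h2, mul_comm, div_mul_cancel₀]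
    exact pow_ne_zero _ (norm_ne_zero_iff.2 hPne)
  -- assembling everything
  have hmain : (∫⁻ y in B, ENNReal.ofReal ‖Pf y‖) ≤ ENNReal.ofReal (∫ x in pre, ‖f x‖) := by
    calc (∫⁻ y in B, ENNReal.ofReal ‖Pf y‖)
        ≤ ∫⁻ y in B, ∑' i, t i y := by
          refine lintegral_mono_ae ?_
          filter_upwards [ae_restrict_mem measurableSet_ball] with y hy using hpoint y hy
      _ = ∑' i, ∫⁻ y in B, t i y := lintegral_tsum htmeas
      _ ≤ ∑' i, ∫⁻ x in V i, ENNReal.ofReal ‖f x‖ := ENNReal.tsum_le_tsum hCoV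
      _ = ∫⁻ x in ⋃ i, V i, ENNReal.ofReal ‖f x‖ := (lintegral_iUnion hVmeas hVdisj _).symm
      _ ≤ ∫⁻ x in pre, ENNReal.ofReal ‖f x‖ := by
          apply lintegral_mono_set
          rw [hVU]
          exact Set.diff_subset
      _ = ENNReal.ofReal (∫ x in pre, ‖f x‖) :=
          (ofReal_integral_eq_lintegral_ofReal (hint.mono_set hpre_sub)
            (Filter.Eventually.of_forall fun x => norm_nonneg _)).symm
  rw [MeasureTheory.integral_eq_lintegral_of_nonneg_ae
    (Filter.Eventually.of_forall fun y => norm_nonneg _) hI.1]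
  calc (∫⁻ y in B, ENNReal.ofReal ‖Pf y‖).toReal
      ≤ (ENNReal.ofReal (∫ x in pre, ‖f x‖)).toReal :=
        ENNReal.toReal_mono ENNReal.ofReal_ne_top hmain
    _ = ∫ x in pre, ‖f x‖ := ENNReal.toReal_ofReal (integral_nonneg fun x => norm_nonneg _)
end
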